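/- arXiv:2106.03942 — 3 statements merged into one kernel-verified Lean document; each statement's English description precedes it below -/
import Mathlib

section
/- For every integer j ≥ 0 and every complex number q with 0 < |q| < 1, the following identity holds: ∑_{i=j}^{∞} (−1)^{i+j} q^{−(i−j)(i+j−1)/2} C_q(2i, i−j) · ([2j+1]_q / [i+j+1]_q) · q^{i²}/(q^{i+1};q)_i = q^{j²} − q^{(j+1)²}, the series on the left converging absolutely. -/
open Filter

/-- The q-Pochhammer symbol `(a;q)_m = ∏_{l=0}^{m-1} (1 - a q^l)`. -/
noncomputable def qPoch (a q : ℂ) (m : ℕ) : ℂ := ∏ l ∈ Finset.range m, (1 - a * q ^ l)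

/-- The Gaussian binomial coefficient `C_q(m,r) = (q;q)_m / ((q;q)_r (q;q)_{m-r})`. -/
noncomputable def qBinom (q : ℂ) (m r : ℕ) : ℂ :=
  qPoch q q m / (qPoch q q r * qPoch q q (m - r))

/-- The q-integer `[m]_q = (1 - q^m)/(1 - q)`. -/
noncomputable def qInt (q : ℂ) (m : ℕ) : ℂ := (1 - q ^ m) / (1 - q)

/-- triangular numbers: `tri k = k(k-1)/2`. -/
def tri : ℕ → ℕ
  | 0 => 0
  | (k+1) => tri k + k

/-- The normalized summand. -/
noncomputable def Aq (q : ℂ) (j k : ℕ) : ℂ :=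
  (-1)^k * q^(j*k + tri (k+1)) * qPoch q q (j+k) / (qPoch q q k * qPoch q q (2*j+k+1))

/-- The telescoping certificate for the `j`-step. -/
noncomputable def Gq (q : ℂ) (j k : ℕ) : ℂ :=
  (1 - q^k) * (1 - (q^(j+1) + q^(2*j+2)) * q^k) / (1 - q^(2*j+2+k)) * Aq q j k

section main
variable {q : ℂ}

lemma one_sub_qpow_ne (hq1 : ‖q‖ < 1) (m : ℕ) : (1 : ℂ) - q^(m+1) ≠ 0 := by
  intro h
  have h1 : q ^ (m+1) = 1 := by linear_combination -h
  have : ‖q ^ (m+1)‖ < 1 := by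
    rw [norm_pow]
    exact pow_lt_one₀ (norm_nonneg q) hq1 (Nat.succ_ne_zero m)
  rw [h1, norm_one] at this; exact lt_irrefl _ this

lemma one_sub_q_ne (hq1 : ‖q‖ < 1) : (1 : ℂ) - q ≠ 0 := by
  have := one_sub_qpow_ne hq1 0; rwa [pow_one] at this

lemma one_sub_mul_ne (hq1 : ‖q‖ < 1) (m : ℕ) : (1:ℂ) - q * q^m ≠ 0 := by
  rw [show (1:ℂ) - q*q^m = 1 - q^(m+1) by ring]; exact one_sub_qpow_ne hq1 m

lemma qPoch_qq_ne (hq1 : ‖q‖ < 1) (m : ℕ) : qPoch q q m ≠ 0 := by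
  rw [qPoch, Finset.prod_ne_zero_iff]
  intro l _
  exact one_sub_mul_ne hq1 l

lemma qPoch_pow_ne (hq1 : ‖q‖ < 1) (m n : ℕ) : qPoch (q^(m+1)) q n ≠ 0 := by
  rw [qPoch, Finset.prod_ne_zero_iff]
  intro l _
  have : (1 : ℂ) - q^(m+1) * q ^ l = 1 - q ^ (m+l+1) := by rw [← pow_add]; ring_nf
  rw [this]; exact one_sub_qpow_ne hq1 _

lemma qPoch_succ (a : ℂ) (m : ℕ) : qPoch a q (m+1) = qPoch a q m * (1 - a * q^m) :=
  Finset.prod_range_succ _ _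

lemma qPoch_add (a : ℂ) (m n : ℕ) :
    qPoch a q (m+n) = qPoch a q m * qPoch (a * q^m) q n := by
  rw [qPoch, qPoch, qPoch, Finset.prod_range_add]
  congr 1
  refine Finset.prod_congr rfl fun l _ => ?_
  rw [mul_assoc, ← pow_add]

lemma two_tri (k : ℕ) : 2 * tri (k+1) = (k+1) * k := by
  induction k with
  | zero => simp [tri]
  | succ n ih =>
      have h : tri (n+1+1) = tri (n+1) + (n+1) := rfl
      rw [h]
      zify at ih ⊢
      linear_combination ih

lemma natsq (j k : ℕ) : (j+k)^2 = (j^2 + (j*k + tri (k+1))) + (j*k + tri k) := by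
  induction k with
  | zero => simp [tri]
  | succ n ih =>
      have h : tri (n+1+1) = tri (n+1) + (n+1) := rfl
      have h2 : tri (n+1) = tri n + n := rfl
      rw [h, h2]
      rw [h2] at ih
      zify at ih ⊢
      linear_combination ih

lemma zpow_eq (hq : q ≠ 0) (j k : ℕ) :
    q ^ (-((((j + k : ℤ) - j) * ((j + k : ℤ) + j - 1)) / 2)) = (q ^ (j*k + tri k) : ℂ)⁻¹ := by
  have h : (((j + k : ℤ) - j) * ((j + k : ℤ) + j - 1)) = 2 * ((j*k + tri k : ℕ) : ℤ) := by
    cases k with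
    | zero => simp [tri]
    | succ m =>
        have h2 : (2 * tri (m+1) : ℤ) = ((m+1) * m : ℤ) := by exact_mod_cast two_tri m
        push_cast at h2 ⊢
        linear_combination -h2
  rw [h]
  have h3 : (2 * ((j*k + tri k : ℕ) : ℤ)) / 2 = ((j*k + tri k : ℕ) : ℤ) := by omega
  rw [h3, zpow_neg, zpow_natCast]

lemma neg_one_pow (j k : ℕ) : ((-1 : ℂ))^(j+k+j) = (-1)^k := by
  rw [show j+k+j = 2*j+k by omega, pow_add, pow_mul]
  norm_num

/-- Identity (I): the theorem's summand equals `(1-q^{2j+1}) q^{j²} Aq j k`. -/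
lemma term_eq (hq : q ≠ 0) (hq1 : ‖q‖ < 1) (j k : ℕ) :
    (-1 : ℂ) ^ (j + k + j) *
        q ^ (-((((j + k : ℤ) - j) * ((j + k : ℤ) + j - 1)) / 2)) *
        qBinom q (2 * (j + k)) ((j + k) - j) *
        (qInt q (2 * j + 1) / qInt q ((j + k) + j + 1)) *
        (q ^ ((j + k) ^ 2) / qPoch (q ^ ((j + k) + 1)) q (j + k))
      = (1 - q^(2*j+1)) * q^(j^2) * Aq q j k := by
  have e1 : (j+k) - j = k := Nat.add_sub_cancel_left j k
  have e3 : (j+k) + j + 1 = 2*j+k+1 := by omega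
  have e5 : q ^ ((j+k)+1) = q * q^(j+k) := by rw [pow_succ]; ring
  have hInt : qInt q (2*j+1) / qInt q (2*j+k+1) = (1 - q^(2*j+1)) / (1 - q^(2*j+k+1)) := by
    rw [qInt, qInt, div_div_div_comm, div_self (one_sub_q_ne hq1), div_one]
  rw [neg_one_pow, zpow_eq hq, e1, e3, hInt, qBinom,
    show 2*(j+k) = (j+k)+(j+k) from by omega,
    show (j+k)+(j+k)-k = 2*j+k from by omega,
    qPoch_add (q := q) q (j+k) (j+k), e5,
    natsq j k, pow_add, Aq, qPoch_succ (q := q) q (2*j+k)]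
  have n1 := qPoch_qq_ne hq1 k
  have n2 := qPoch_qq_ne hq1 (j+k)
  have n3 := qPoch_qq_ne hq1 (2*j+k)
  have n4 : qPoch (q * q^(j+k)) q (j+k) ≠ 0 := by
    rw [← e5]; exact qPoch_pow_ne hq1 _ _
  have m1 := one_sub_mul_ne hq1 (2*j+k)
  have m2 : (1:ℂ) - q^(2*j+k+1) ≠ 0 := one_sub_qpow_ne hq1 _
  have m5 : (q : ℂ)^(j*k + tri k) ≠ 0 := pow_ne_zero _ hq
  rw [inv_eq_one_div]
  simp only [mul_div_assoc', div_mul_div_comm, div_mul_eq_mul_div, mul_one, one_mul, div_div]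
  rw [div_eq_div_iff (by apply_rules [mul_ne_zero, pow_ne_zero]) (by apply_rules [mul_ne_zero, pow_ne_zero])]
  ring

/-- Base-case telescoping: `Aq 0 k = G0 k - G0 (k+1)` with `G0 k = (1-q^{k+1}) Aq 0 k`. -/
lemma base (hq1 : ‖q‖ < 1) (k : ℕ) :
    Aq q 0 k = (1 - q^(k+1)) * Aq q 0 k - (1 - q^((k+1)+1)) * Aq q 0 (k+1) := by
  have e1 : (0:ℕ)+k = k := by omega
  have e2 : 2*0+k+1 = k+1 := by omega
  have e3 : (0:ℕ)+(k+1) = k+1 := by omega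
  have e4 : 2*0+(k+1)+1 = (k+1)+1 := by omega
  have e5 : tri (k+1+1) = tri (k+1) + (k+1) := rfl
  simp only [Aq, e1, e2, e3, e4, e5, qPoch_succ]
  have n1 := qPoch_qq_ne hq1 k
  have m1 := one_sub_mul_ne hq1 k
  have m2 := one_sub_mul_ne hq1 (k+1)
  simp only [mul_div_assoc', div_mul_div_comm, div_mul_eq_mul_div, mul_one, one_mul, div_div]
  rw [div_sub_div _ _ (by apply_rules [mul_ne_zero, pow_ne_zero])
      (by apply_rules [mul_ne_zero, pow_ne_zero]),
    div_eq_div_iff (by apply_rules [mul_ne_zero, pow_ne_zero])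
      (by apply_rules [mul_ne_zero, pow_ne_zero])]
  ring

/-- Ratio recurrence. -/
lemma ratioA (hq1 : ‖q‖ < 1) (j k : ℕ) :
    Aq q j (k+1) = Aq q j k *
      (-(q^(j+k+1)) * (1 - q^(j+k+1)) / ((1 - q^(k+1)) * (1 - q^(2*j+k+2)))) := by
  have e3 : j+(k+1) = (j+k)+1 := by omega
  have e4 : 2*j+(k+1)+1 = (2*j+k+1)+1 := by omega
  have e5 : tri (k+1+1) = tri (k+1) + (k+1) := rfl
  simp only [Aq, e3, e4, e5, qPoch_succ]
  have n1 := qPoch_qq_ne hq1 k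
  have n2 := qPoch_qq_ne hq1 (j+k)
  have n3 := qPoch_qq_ne hq1 (2*j+k+1)
  have m1 := one_sub_mul_ne hq1 k
  have m2 := one_sub_mul_ne hq1 (j+k)
  have m3 := one_sub_mul_ne hq1 (2*j+k+1)
  have m4 : (1:ℂ) - q^(k+1) ≠ 0 := one_sub_qpow_ne hq1 _
  have m5 : (1:ℂ) - q^(j+k+1) ≠ 0 := one_sub_qpow_ne hq1 _
  have m6 : (1:ℂ) - q^(2*j+k+2) ≠ 0 := by
    rw [show 2*j+k+2 = (2*j+k+1)+1 by omega]; exact one_sub_qpow_ne hq1 _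
  have n4 := qPoch_qq_ne hq1 (2*j+k)
  have m0 := one_sub_mul_ne hq1 (2*j+k)
  simp only [mul_div_assoc', div_mul_div_comm, div_mul_eq_mul_div, mul_one, one_mul, div_div]
  rw [div_eq_div_iff (by apply_rules [mul_ne_zero, pow_ne_zero])
      (by apply_rules [mul_ne_zero, pow_ne_zero])]
  ring

lemma norm_one_sub_le (hq1 : ‖q‖ < 1) (m : ℕ) : ‖(1:ℂ) - q^m‖ ≤ 2 := by
  calc ‖(1:ℂ) - q^m‖ ≤ ‖(1:ℂ)‖ + ‖q^m‖ := norm_sub_le _ _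
  _ ≤ 1 + 1 := by
      rw [norm_one, norm_pow]
      have : ‖q‖^m ≤ 1 := pow_le_one₀ (norm_nonneg q) hq1.le
      linarith
  _ = 2 := by norm_num

lemma norm_one_sub_ge (hq1 : ‖q‖ < 1) (m : ℕ) : 1 - ‖q‖ ≤ ‖(1:ℂ) - q^(m+1)‖ := by
  have h1 : ‖(1:ℂ)‖ - ‖q^(m+1)‖ ≤ ‖(1:ℂ) - q^(m+1)‖ := norm_sub_norm_le _ _
  have h2 : ‖q^(m+1)‖ ≤ ‖q‖ := by
    rw [norm_pow]
    calc ‖q‖^(m+1) ≤ ‖q‖^1 := pow_le_pow_of_le_one (norm_nonneg q) hq1.le (by omega)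
    _ = ‖q‖ := pow_one _
  rw [norm_one] at h1
  linarith

lemma Aq_norm_summable (hq1 : ‖q‖ < 1) (j : ℕ) : Summable (fun k => ‖Aq q j k‖) := by
  have hb1 : (0:ℝ) < 1 - ‖q‖ := by linarith
  apply summable_of_ratio_norm_eventually_le (r := 1/2) (by norm_num)
  have htend : Tendsto (fun k : ℕ => ‖q‖^k) atTop (nhds 0) :=
    tendsto_pow_atTop_nhds_zero_of_lt_one (norm_nonneg q) hq1
  have hev : ∀ᶠ k in atTop, ‖q‖^k < (1-‖q‖)^2/4 :=
    htend.eventually (gt_mem_nhds (by positivity))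
  filter_upwards [hev] with k hk
  rw [Real.norm_eq_abs, Real.norm_eq_abs, abs_of_nonneg (norm_nonneg _),
    abs_of_nonneg (norm_nonneg _), ratioA hq1 j k]
  rw [norm_mul]
  have hfac : ‖-(q^(j+k+1)) * (1 - q^(j+k+1)) / ((1 - q^(k+1)) * (1 - q^(2*j+k+2)))‖ ≤ 1/2 := by
    rw [norm_div, norm_mul, norm_mul, norm_neg, norm_pow]
    have hnum : ‖q‖^(j+k+1) * ‖(1:ℂ) - q^(j+k+1)‖ ≤ ‖q‖^k * 2 := by
      apply mul_le_mul _ (norm_one_sub_le hq1 _) (norm_nonneg _) (by positivity)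
      calc ‖q‖^(j+k+1) ≤ ‖q‖^k := pow_le_pow_of_le_one (norm_nonneg q) hq1.le (by omega)
      _ = ‖q‖^k := rfl
    have hden : (1-‖q‖) * (1-‖q‖) ≤ ‖(1:ℂ) - q^(k+1)‖ * ‖(1:ℂ) - q^(2*j+k+2)‖ := by
      apply mul_le_mul (norm_one_sub_ge hq1 k) _ hb1.le (norm_nonneg _)
      have := norm_one_sub_ge hq1 (2*j+k+1)
      rwa [show 2*j+k+1+1 = 2*j+k+2 by omega] at this
    have hdenpos : (0:ℝ) < (1-‖q‖) * (1-‖q‖) := by positivity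
    calc ‖q‖^(j+k+1) * ‖(1:ℂ) - q^(j+k+1)‖ / (‖(1:ℂ) - q^(k+1)‖ * ‖(1:ℂ) - q^(2*j+k+2)‖)
        ≤ ‖q‖^k * 2 / ((1-‖q‖) * (1-‖q‖)) := by
          apply div_le_div₀ (by positivity) hnum hdenpos hden
    _ ≤ 1/2 := by
          rw [div_le_div_iff₀ hdenpos (by norm_num)]
          nlinarith [hk, norm_nonneg q, pow_nonneg (norm_nonneg q) k]
  calc ‖Aq q j k‖ * ‖-(q^(j+k+1)) * (1 - q^(j+k+1)) / ((1 - q^(k+1)) * (1 - q^(2*j+k+2)))‖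
      ≤ ‖Aq q j k‖ * (1/2) := by
        exact mul_le_mul_of_nonneg_left hfac (norm_nonneg _)
  _ = 1/2 * ‖Aq q j k‖ := by ring

lemma Aq_tendsto_zero (hq1 : ‖q‖ < 1) (j : ℕ) :
    Tendsto (fun k => ‖Aq q j k‖) atTop (nhds 0) :=
  (Aq_norm_summable hq1 j).tendsto_atTop_zero

lemma Gq_tendsto_zero (hq1 : ‖q‖ < 1) (j : ℕ) :
    Tendsto (fun k => Gq q j k) atTop (nhds 0) := by
  have hb1 : (0:ℝ) < 1 - ‖q‖ := by linarith
  apply squeeze_zero_norm (a := fun k => (2*3/(1-‖q‖)) * ‖Aq q j k‖)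
  · intro k
    rw [Gq, norm_mul, norm_div, norm_mul]
    have h1 : ‖(1:ℂ) - q^k‖ ≤ 2 := norm_one_sub_le hq1 k
    have h2 : ‖(1:ℂ) - (q^(j+1) + q^(2*j+2)) * q^k‖ ≤ 3 := by
      calc ‖(1:ℂ) - (q^(j+1) + q^(2*j+2)) * q^k‖ ≤ ‖(1:ℂ)‖ + ‖(q^(j+1) + q^(2*j+2)) * q^k‖ :=
            norm_sub_le _ _
      _ ≤ 1 + 2*1 := by
          rw [norm_one, norm_mul]
          have hs2 : ‖q^(j+1) + q^(2*j+2)‖ ≤ 2 := by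
            refine le_trans (norm_add_le _ _) ?_
            rw [norm_pow, norm_pow]
            have b1 := pow_le_one₀ (norm_nonneg q) hq1.le (n := j+1)
            have b2 := pow_le_one₀ (norm_nonneg q) hq1.le (n := 2*j+2)
            linarith
          have b3 : ‖q^k‖ ≤ 1 := by
            rw [norm_pow]; exact pow_le_one₀ (norm_nonneg q) hq1.le
          nlinarith [norm_nonneg (q^(j+1)+q^(2*j+2)), norm_nonneg (q^k)]
      _ = 3 := by norm_num
    have h3 : 1 - ‖q‖ ≤ ‖(1:ℂ) - q^(2*j+2+k)‖ := by
      have := norm_one_sub_ge hq1 (2*j+1+k)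
      rwa [show 2*j+1+k+1 = 2*j+2+k by omega] at this
    have h4 : (0:ℝ) < ‖(1:ℂ) - q^(2*j+2+k)‖ := lt_of_lt_of_le hb1 h3
    have key : ‖(1:ℂ) - q^k‖ * ‖(1:ℂ) - (q^(j+1) + q^(2*j+2)) * q^k‖ / ‖(1:ℂ) - q^(2*j+2+k)‖
        ≤ 2*3/(1-‖q‖) := by
      apply div_le_div₀ (by positivity) _ hb1 h3
      exact mul_le_mul h1 h2 (norm_nonneg _) (by norm_num)
    exact mul_le_mul_of_nonneg_right key (norm_nonneg _)
  · have := (Aq_tendsto_zero hq1 j).const_mul (2*3/(1-‖q‖))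
    simpa using this

/-- The `j`-step telescoping certificate identity. -/
lemma cert (hq1 : ‖q‖ < 1) (j k : ℕ) :
    Aq q (j+1) k - Aq q j k = Gq q j (k+1) - Gq q j k := by
  have e1 : j+1+k = (j+k)+1 := by omega
  have e2 : 2*(j+1)+k+1 = ((2*j+k+1)+1)+1 := by omega
  have e3 : j+(k+1) = (j+k)+1 := by omega
  have e4 : 2*j+(k+1)+1 = (2*j+k+1)+1 := by omega
  have e5 : tri (k+2) = tri (k+1) + (k+1) := rfl
  have e6 : 2*j+2+(k+1) = (2*j+2+k)+1 := by omega
  have n1 := qPoch_qq_ne hq1 k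
  have n2 := qPoch_qq_ne hq1 (j+k)
  have n3 := qPoch_qq_ne hq1 (2*j+k)
  have m1 := one_sub_mul_ne hq1 k
  have m2 := one_sub_mul_ne hq1 (j+k)
  have m3 := one_sub_mul_ne hq1 (2*j+k)
  have m3' := one_sub_mul_ne hq1 (2*j+k+1)
  have m4 := one_sub_mul_ne hq1 ((2*j+k+1)+1)
  have m5 : (1:ℂ) - q^(2*j+2+k) ≠ 0 := by
    rw [show 2*j+2+k = (2*j+1+k)+1 by omega]; exact one_sub_qpow_ne hq1 _
  have m6 : (1:ℂ) - q^((2*j+2+k)+1) ≠ 0 := one_sub_qpow_ne hq1 _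
  simp only [Gq, Aq, e1, e2, e3, e4, e5, e6, qPoch_succ, div_mul_div_comm]
  rw [div_sub_div _ _ (by apply_rules [mul_ne_zero]) (by apply_rules [mul_ne_zero]),
    div_sub_div _ _ (by apply_rules [mul_ne_zero]) (by apply_rules [mul_ne_zero]),
    div_eq_div_iff (by apply_rules [mul_ne_zero]) (by apply_rules [mul_ne_zero])]
  ring

lemma hasSum_Aq (hq1 : ‖q‖ < 1) (j : ℕ) : HasSum (Aq q j) 1 := by
  induction j with
  | zero =>
      have hs : Summable (fun k => ‖Aq q 0 k‖) := Aq_norm_summable hq1 0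
      rw [hasSum_iff_tendsto_nat_of_summable_norm hs]
      have hpart : ∀ n, ∑ i ∈ Finset.range n, Aq q 0 i
          = (1-q^(0+1))*Aq q 0 0 - (1-q^(n+1))*Aq q 0 n := by
        intro n
        rw [← Finset.sum_range_sub' (fun i => (1-q^(i+1))*Aq q 0 i) n]
        exact Finset.sum_congr rfl fun i _ => base hq1 i
      have hf0 : (1-q^(0+1))*Aq q 0 0 = 1 := by
        have m1 := one_sub_mul_ne hq1 0
        simp [Aq, qPoch, tri]
        exact div_self (one_sub_q_ne hq1)
      have hG0 : Tendsto (fun n => (1-q^(n+1))*Aq q 0 n) atTop (nhds 0) := by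
        apply squeeze_zero_norm (a := fun n => 2 * ‖Aq q 0 n‖)
        · intro n
          rw [norm_mul]
          exact mul_le_mul_of_nonneg_right (norm_one_sub_le hq1 (n+1)) (norm_nonneg _)
        · have := (Aq_tendsto_zero hq1 0).const_mul 2
          simpa using this
      simp only [hpart, hf0]
      have := tendsto_const_nhds (x := (1:ℂ)) (f := atTop (α := ℕ)) |>.sub hG0
      simpa using this
  | succ j ih =>
      have hA1 := Aq_norm_summable hq1 (j+1)
      have hA0 := Aq_norm_summable hq1 j
      have hDnorm : Summable (fun k => ‖Aq q (j+1) k - Aq q j k‖) := by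
        apply Summable.of_nonneg_of_le (fun _ => norm_nonneg _)
          (fun k => norm_sub_le _ _) (hA1.add hA0)
      have key : HasSum (fun k => Aq q (j+1) k - Aq q j k) 0 := by
        rw [hasSum_iff_tendsto_nat_of_summable_norm hDnorm]
        have hpart : ∀ n, ∑ i ∈ Finset.range n, (Aq q (j+1) i - Aq q j i)
            = Gq q j n - Gq q j 0 := by
          intro n
          rw [← Finset.sum_range_sub (Gq q j) n]
          exact Finset.sum_congr rfl fun i _ => cert hq1 j i
        have h0 : Gq q j 0 = 0 := by simp [Gq]
        simp only [hpart, h0, sub_zero]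
        exact Gq_tendsto_zero hq1 j
      have := ih.add key
      simp only [add_sub_cancel] at this
      simpa using this

end main

/-- For `0 < |q| < 1` and `j ≥ 0`, the series over `i ≥ j` (written `i = j + k`, `k ≥ 0`)
`∑_{i≥j} (−1)^{i+j} q^{−(i−j)(i+j−1)/2} C_q(2i,i−j) ([2j+1]_q/[i+j+1]_q) q^{i²}/(q^{i+1};q)_i`
converges absolutely to `q^{j²} − q^{(j+1)²}`. -/
theorem inverse_transform_of_minus_one_surgery (j : ℕ) (q : ℂ)
    (hq0 : 0 < ‖q‖) (hq1 : ‖q‖ < 1) :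
    Summable (fun k : ℕ =>
      ‖(-1 : ℂ) ^ (j + k + j) *
        q ^ (-((((j + k : ℤ) - j) * ((j + k : ℤ) + j - 1)) / 2)) *
        qBinom q (2 * (j + k)) ((j + k) - j) *
        (qInt q (2 * j + 1) / qInt q ((j + k) + j + 1)) *
        (q ^ ((j + k) ^ 2) / qPoch (q ^ ((j + k) + 1)) q (j + k))‖) ∧
    ∑' k : ℕ, (-1 : ℂ) ^ (j + k + j) *
        q ^ (-((((j + k : ℤ) - j) * ((j + k : ℤ) + j - 1)) / 2)) *
        qBinom q (2 * (j + k)) ((j + k) - j) *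
        (qInt q (2 * j + 1) / qInt q ((j + k) + j + 1)) *
        (q ^ ((j + k) ^ 2) / qPoch (q ^ ((j + k) + 1)) q (j + k))
      = q ^ (j ^ 2) - q ^ ((j + 1) ^ 2) := by
  have hq : q ≠ 0 := by
    intro h; rw [h, norm_zero] at hq0; exact lt_irrefl _ hq0
  have hterm := term_eq hq hq1 j
  constructor
  · apply Summable.congr ((Aq_norm_summable hq1 j).mul_left ‖(1 - q^(2*j+1)) * q^(j^2)‖)
    intro k
    rw [hterm k, norm_mul ((1 - q^(2*j+1)) * q^(j^2)) (Aq q j k)]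
  · have hsum : HasSum
        (fun k => (1 - q^(2*j+1)) * q^(j^2) * Aq q j k)
        ((1 - q^(2*j+1)) * q^(j^2) * 1) := (hasSum_Aq hq1 j).mul_left _
    have hfun : (fun k : ℕ => (-1 : ℂ) ^ (j + k + j) *
        q ^ (-((((j + k : ℤ) - j) * ((j + k : ℤ) + j - 1)) / 2)) *
        qBinom q (2 * (j + k)) ((j + k) - j) *
        (qInt q (2 * j + 1) / qInt q ((j + k) + j + 1)) *
        (q ^ ((j + k) ^ 2) / qPoch (q ^ ((j + k) + 1)) q (j + k)))
        = fun k => (1 - q^(2*j+1)) * q^(j^2) * Aq q j k := funext hterm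
    rw [hfun, hsum.tsum_eq]
    ring
end

section
/- For every integer j ≥ 0 and every complex number q with 0 < |q| < 1, the following identity holds: ∑_{i=j}^{∞} (−1)^{i+j} q^{−(i−j)(i+j−1)/2} C_q(2i, i−j) · ([2j+1]_q / [i+j+1]_q) · (−1)^i q^{i(i+1)/2}/(q^{i+1};q)_i = (q^{−j²} − q^{−(j+1)²}) · ( ∑_{k∈ℤ, |k|>j} (−1)^k q^{k(3k+1)/2} ) / (q;q)_∞, both sides being absolutely convergent. -/
open Finset Filter Topology

namespace RegAux

noncomputable def E (q : ℂ) (n : ℕ) : ℂ := ∏ l ∈ Finset.range n, (1 - q ^ (l + 1))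

noncomputable def PP (q : ℂ) : ℂ := ∏' l : ℕ, (1 - q ^ (l + 1))

noncomputable def U (q : ℂ) (j : ℕ) : ℂ := ∑' r : ℕ, q ^ ((j + 1) * r) * E q (j + r)

noncomputable def Phi (q : ℂ) (r : ℕ) : ℂ := ∑' m : ℕ, q ^ ((r + 1) * m) / E q m

noncomputable def Bq (q : ℂ) (j r : ℕ) : ℂ := E q (j + r) / (E q j * E q r)

noncomputable def Fj (q : ℂ) (j : ℕ) : ℂ :=
  ∑' m : ℕ, q ^ m * E q (j + m) / (E q m * E q (2 * j + m + 1))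

noncomputable def Tt (q : ℂ) (j : ℕ) : ℂ :=
  ∑' k : ℤ, if (j : ℤ) < |k| then (-1 : ℂ) ^ k * q ^ (k * (3 * k + 1) / 2) else 0

/-- `(j+1)(3j+2)/2`, the pentagonal exponent at `k = -(j+1)`. -/
def NJ (j : ℕ) : ℕ := (j + 1) * (3 * j + 2) / 2

noncomputable def Rr (q : ℂ) (j : ℕ) : ℂ :=
  (-1 : ℂ) ^ (j + 1) * q ^ NJ j * (U q j / E q j)

variable {q : ℂ}

/- ## Basic facts about `E` -/

lemma E_zero (q : ℂ) : E q 0 = 1 := by simp [E]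

lemma E_succ (q : ℂ) (n : ℕ) : E q (n + 1) = E q n * (1 - q ^ (n + 1)) :=
  Finset.prod_range_succ _ _

lemma E_add (q : ℂ) (a b : ℕ) :
    E q (a + b) = E q a * ∏ l ∈ Finset.range b, (1 - q ^ (a + l + 1)) := by
  rw [E, E, Finset.prod_range_add]

lemma sum_pow_norm_le (hq1 : ‖q‖ < 1) (n : ℕ) :
    ∑ l ∈ Finset.range n, ‖q‖ ^ (l + 1) ≤ ‖q‖ / (1 - ‖q‖) := by
  have h0 : (0:ℝ) ≤ ‖q‖ := norm_nonneg q
  have hs : Summable fun l : ℕ => ‖q‖ ^ l := summable_geometric_of_lt_one h0 hq1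
  have h1 : ∑ l ∈ Finset.range n, ‖q‖ ^ (l + 1) = ‖q‖ * ∑ l ∈ Finset.range n, ‖q‖ ^ l := by
    rw [Finset.mul_sum]
    exact Finset.sum_congr rfl fun l _ => pow_succ' _ _
  have h2 : ∑ l ∈ Finset.range n, ‖q‖ ^ l ≤ (1 - ‖q‖)⁻¹ := by
    have h3 := Summable.sum_le_tsum (Finset.range n) (fun i _ => pow_nonneg h0 i) hs
    rwa [tsum_geometric_of_lt_one h0 hq1] at h3
  rw [h1, div_eq_mul_inv]
  exact mul_le_mul_of_nonneg_left h2 h0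

lemma norm_E_le (hq1 : ‖q‖ < 1) (n : ℕ) : ‖E q n‖ ≤ Real.exp (‖q‖ / (1 - ‖q‖)) := by
  have h0 : (0:ℝ) ≤ ‖q‖ := norm_nonneg q
  calc ‖E q n‖ = ∏ l ∈ Finset.range n, ‖1 - q ^ (l + 1)‖ := by rw [E]; exact norm_prod _ _
  _ ≤ ∏ l ∈ Finset.range n, Real.exp (‖q‖ ^ (l + 1)) := by
      apply Finset.prod_le_prod (fun l _ => norm_nonneg _)
      intro l _
      have h1 : ‖1 - q ^ (l + 1)‖ ≤ 1 + ‖q‖ ^ (l + 1) := by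
        calc ‖1 - q ^ (l + 1)‖ ≤ ‖(1:ℂ)‖ + ‖q ^ (l + 1)‖ := norm_sub_le _ _
        _ = 1 + ‖q‖ ^ (l + 1) := by rw [norm_one, norm_pow]
      have h2 := Real.add_one_le_exp (‖q‖ ^ (l + 1))
      linarith
  _ = Real.exp (∑ l ∈ Finset.range n, ‖q‖ ^ (l + 1)) := (Real.exp_sum _ _).symm
  _ ≤ Real.exp (‖q‖ / (1 - ‖q‖)) := Real.exp_le_exp.2 (sum_pow_norm_le hq1 n)

lemma aux_exp_lb {a x : ℝ} (ha : a < 1) (hx0 : 0 ≤ x) (hxa : x ≤ a) :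
    Real.exp (-(x / (1 - a))) ≤ 1 - x := by
  have h1 : (0:ℝ) < 1 - a := by linarith
  have hx1 : x < 1 := lt_of_le_of_lt hxa ha
  set y := x / (1 - a) with hy
  have hy0 : 0 ≤ y := div_nonneg hx0 h1.le
  have hyx : y * (1 - a) = x := div_mul_cancel₀ x h1.ne'
  have h5 : (1:ℝ) ≤ (1 - x) * (1 + y) := by
    nlinarith [mul_nonneg hy0 (sub_nonneg.2 hxa)]
  have h6 : (1 - x) * (1 + y) ≤ (1 - x) * Real.exp y := by
    apply mul_le_mul_of_nonneg_left _ (by linarith : (0:ℝ) ≤ 1 - x)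
    linarith [Real.add_one_le_exp y]
  rw [Real.exp_neg, inv_eq_one_div, div_le_iff₀ (Real.exp_pos y)]
  linarith

lemma exp_le_norm_E (hq1 : ‖q‖ < 1) (n : ℕ) :
    Real.exp (-(‖q‖ / (1 - ‖q‖) ^ 2)) ≤ ‖E q n‖ := by
  have h0 : (0:ℝ) ≤ ‖q‖ := norm_nonneg q
  have h1 : (0:ℝ) < 1 - ‖q‖ := by linarith
  calc Real.exp (-(‖q‖ / (1 - ‖q‖) ^ 2))
      ≤ Real.exp (∑ l ∈ Finset.range n, -(‖q‖ ^ (l + 1) / (1 - ‖q‖))) := by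
        apply Real.exp_le_exp.2
        rw [Finset.sum_neg_distrib, neg_le_neg_iff]
        rw [← Finset.sum_div]
        rw [div_le_div_iff₀ h1 (by positivity : (0:ℝ) < (1 - ‖q‖) ^ 2)]
        have h2 := sum_pow_norm_le hq1 n
        calc (∑ l ∈ Finset.range n, ‖q‖ ^ (l + 1)) * (1 - ‖q‖) ^ 2
            ≤ (‖q‖ / (1 - ‖q‖)) * (1 - ‖q‖) ^ 2 := by
              exact mul_le_mul_of_nonneg_right h2 (by positivity)
        _ = ‖q‖ * (1 - ‖q‖) := by
              rw [pow_two, ← mul_assoc, div_mul_cancel₀ _ h1.ne']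
  _ = ∏ l ∈ Finset.range n, Real.exp (-(‖q‖ ^ (l + 1) / (1 - ‖q‖))) := Real.exp_sum _ _
  _ ≤ ∏ l ∈ Finset.range n, ‖1 - q ^ (l + 1)‖ := by
      apply Finset.prod_le_prod (fun l _ => (Real.exp_pos _).le)
      intro l _
      have h3 : ‖q‖ ^ (l + 1) ≤ ‖q‖ := pow_le_of_le_one h0 hq1.le (Nat.succ_ne_zero l)
      have h4 := aux_exp_lb hq1 (pow_nonneg h0 (l + 1)) h3
      calc Real.exp (-(‖q‖ ^ (l + 1) / (1 - ‖q‖))) ≤ 1 - ‖q‖ ^ (l + 1) := h4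
      _ ≤ ‖1 - q ^ (l + 1)‖ := by
          have h5 := norm_sub_norm_le (1:ℂ) (q ^ (l + 1))
          rw [norm_one, norm_pow] at h5
          exact h5
  _ = ‖E q n‖ := by rw [E]; exact (norm_prod _ _).symm

lemma E_ne_zero (hq1 : ‖q‖ < 1) (n : ℕ) : E q n ≠ 0 := by
  intro h
  have h2 := exp_le_norm_E hq1 n
  rw [h, norm_zero] at h2
  exact absurd h2 (not_le.2 (Real.exp_pos _))

lemma one_sub_pow_ne (hq1 : ‖q‖ < 1) (n : ℕ) : (1 : ℂ) - q ^ (n + 1) ≠ 0 := by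
  intro h
  rw [sub_eq_zero] at h
  have h1 : ‖q ^ (n + 1)‖ < 1 := by
    rw [norm_pow]
    exact pow_lt_one₀ (norm_nonneg q) hq1 n.succ_ne_zero
  rw [← h, norm_one] at h1
  exact lt_irrefl 1 h1

/- ## Geometric summability helpers -/

lemma summable_norm_of_geom_bound {f : ℕ → ℂ} {K a : ℝ} (ha0 : 0 ≤ a) (ha : a < 1)
    (h : ∀ n, ‖f n‖ ≤ K * a ^ n) : Summable fun n => ‖f n‖ := by
  exact Summable.of_nonneg_of_le (fun n => norm_nonneg _) h
    (((summable_geometric_of_lt_one ha0 ha)).mul_left K)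

lemma summable_of_geom_bound {f : ℕ → ℂ} {K a : ℝ} (ha0 : 0 ≤ a) (ha : a < 1)
    (h : ∀ n, ‖f n‖ ≤ K * a ^ n) : Summable f :=
  (summable_norm_of_geom_bound ha0 ha h).of_norm

lemma norm_tsum_le_of_geom_bound {f : ℕ → ℂ} {K a : ℝ} (ha0 : 0 ≤ a) (ha : a < 1)
    (h : ∀ n, ‖f n‖ ≤ K * a ^ n) : ‖∑' n, f n‖ ≤ K * (1 - a)⁻¹ := by
  have hs := summable_norm_of_geom_bound ha0 ha h
  calc ‖∑' n, f n‖ ≤ ∑' n, ‖f n‖ := norm_tsum_le_tsum_norm hs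
  _ ≤ ∑' n : ℕ, K * a ^ n :=
      Summable.tsum_le_tsum h hs (((summable_geometric_of_lt_one ha0 ha)).mul_left K)
  _ = K * (1 - a)⁻¹ := by rw [tsum_mul_left, tsum_geometric_of_lt_one ha0 ha]

/- ## Bounds for the summands -/

lemma U_term_bound (hq1 : ‖q‖ < 1) (j : ℕ) (r : ℕ) :
    ‖q ^ ((j + 1) * r) * E q (j + r)‖ ≤ Real.exp (‖q‖ / (1 - ‖q‖)) * ‖q‖ ^ r := by
  rw [norm_mul, norm_pow]
  have h1 : ‖q‖ ^ ((j + 1) * r) ≤ ‖q‖ ^ r :=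
    pow_le_pow_of_le_one (norm_nonneg q) hq1.le (Nat.le_mul_of_pos_left r (Nat.succ_pos j))
  calc ‖q‖ ^ ((j + 1) * r) * ‖E q (j + r)‖
      ≤ ‖q‖ ^ r * Real.exp (‖q‖ / (1 - ‖q‖)) :=
        mul_le_mul h1 (norm_E_le hq1 _) (norm_nonneg _) (pow_nonneg (norm_nonneg q) r)
  _ = _ := mul_comm _ _

lemma summable_U_term (hq1 : ‖q‖ < 1) (j : ℕ) :
    Summable fun r : ℕ => q ^ ((j + 1) * r) * E q (j + r) :=
  summable_of_geom_bound (norm_nonneg q) hq1 (U_term_bound hq1 j)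

lemma norm_U_le (hq1 : ‖q‖ < 1) (j : ℕ) :
    ‖U q j‖ ≤ Real.exp (‖q‖ / (1 - ‖q‖)) * (1 - ‖q‖)⁻¹ :=
  norm_tsum_le_of_geom_bound (norm_nonneg q) hq1 (U_term_bound hq1 j)

lemma Phi_term_bound (hq1 : ‖q‖ < 1) (r : ℕ) (m : ℕ) :
    ‖q ^ ((r + 1) * m) / E q m‖ ≤ (Real.exp (-(‖q‖ / (1 - ‖q‖) ^ 2)))⁻¹ * ‖q‖ ^ m := by
  rw [norm_div, norm_pow]
  have hc : (0:ℝ) < Real.exp (-(‖q‖ / (1 - ‖q‖) ^ 2)) := Real.exp_pos _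
  have h1 : ‖q‖ ^ ((r + 1) * m) ≤ ‖q‖ ^ m :=
    pow_le_pow_of_le_one (norm_nonneg q) hq1.le (Nat.le_mul_of_pos_left m (Nat.succ_pos r))
  have h2 : (‖E q m‖)⁻¹ ≤ (Real.exp (-(‖q‖ / (1 - ‖q‖) ^ 2)))⁻¹ :=
    inv_anti₀ hc (exp_le_norm_E hq1 m)
  calc ‖q‖ ^ ((r + 1) * m) / ‖E q m‖ = ‖q‖ ^ ((r + 1) * m) * (‖E q m‖)⁻¹ := div_eq_mul_inv _ _
  _ ≤ ‖q‖ ^ m * (Real.exp (-(‖q‖ / (1 - ‖q‖) ^ 2)))⁻¹ :=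
      mul_le_mul h1 h2 (inv_nonneg.2 (norm_nonneg _)) (pow_nonneg (norm_nonneg q) m)
  _ = _ := mul_comm _ _

lemma summable_Phi_term (hq1 : ‖q‖ < 1) (r : ℕ) :
    Summable fun m : ℕ => q ^ ((r + 1) * m) / E q m :=
  summable_of_geom_bound (norm_nonneg q) hq1 (Phi_term_bound hq1 r)

/- ## The infinite product -/

lemma multipliable_P (hq1 : ‖q‖ < 1) : Multipliable fun l : ℕ => (1 - q ^ (l + 1)) := by
  apply Complex.multipliable_of_summable_log
  apply Summable.of_norm
  apply Summable.of_nonneg_of_le (fun _ => norm_nonneg _) ?_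
    (((summable_geometric_of_lt_one (norm_nonneg q) hq1)).mul_left
      (‖q‖ * ((1 - ‖q‖)⁻¹ / 2 + 1)))
  intro l
  have h0 : (0:ℝ) ≤ ‖q‖ := norm_nonneg q
  have hn : ‖-q ^ (l + 1)‖ = ‖q‖ ^ (l + 1) := by rw [norm_neg, norm_pow]
  have ht1 : ‖q‖ ^ (l + 1) ≤ ‖q‖ := pow_le_of_le_one h0 hq1.le (Nat.succ_ne_zero l)
  have hz : ‖-q ^ (l + 1)‖ < 1 := by rw [hn]; exact lt_of_le_of_lt ht1 hq1
  have h1 := Complex.norm_log_one_add_le hz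
  rw [hn] at h1
  have h2 : (1 : ℂ) + -q ^ (l + 1) = 1 - q ^ (l + 1) := by ring
  rw [h2] at h1
  refine h1.trans ?_
  have hge : (0:ℝ) < 1 - ‖q‖ := by linarith
  have hinv : (1 - ‖q‖ ^ (l + 1))⁻¹ ≤ (1 - ‖q‖)⁻¹ := by
    apply inv_anti₀ hge
    have : ‖q‖ ^ (l + 1) ≤ ‖q‖ := ht1
    linarith
  have hpow : ‖q‖ ^ (l + 1) = ‖q‖ * ‖q‖ ^ l := pow_succ' _ _
  have hle1 : ‖q‖ ^ (l + 1) ≤ 1 := le_trans ht1 hq1.le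
  have key : (‖q‖ ^ (l + 1)) ^ 2 * (1 - ‖q‖ ^ (l + 1))⁻¹ / 2 + ‖q‖ ^ (l + 1)
      ≤ ‖q‖ ^ (l + 1) * ((1 - ‖q‖)⁻¹ / 2 + 1) := by
    have hsq : (‖q‖ ^ (l + 1)) ^ 2 ≤ ‖q‖ ^ (l + 1) := by nlinarith [pow_nonneg h0 (l + 1)]
    have h3 : (‖q‖ ^ (l + 1)) ^ 2 * (1 - ‖q‖ ^ (l + 1))⁻¹ ≤ ‖q‖ ^ (l + 1) * (1 - ‖q‖)⁻¹ := by
      apply mul_le_mul hsq hinv (inv_nonneg.2 (by linarith)) (pow_nonneg h0 _)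
    linarith
  refine key.trans ?_
  rw [hpow]
  ring_nf
  exact le_refl _

lemma tendsto_E_P (hq1 : ‖q‖ < 1) : Tendsto (fun n => E q n) atTop (𝓝 (PP q)) :=
  (multipliable_P hq1).hasProd.tendsto_prod_nat

lemma P_ne_zero (hq1 : ‖q‖ < 1) : PP q ≠ 0 := by
  have h2 : Tendsto (fun n => ‖E q n‖) atTop (𝓝 ‖PP q‖) := (tendsto_E_P hq1).norm
  have h3 : Real.exp (-(‖q‖ / (1 - ‖q‖) ^ 2)) ≤ ‖PP q‖ :=
    ge_of_tendsto' h2 fun n => exp_le_norm_E hq1 n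
  intro h
  rw [h, norm_zero] at h3
  exact absurd h3 (not_le.2 (Real.exp_pos _))

/- ## Euler's identity -/

lemma Phi_succ (hq1 : ‖q‖ < 1) (r : ℕ) : Phi q (r + 1) = (1 - q ^ (r + 1)) * Phi q r := by
  have hs1 : Summable fun m : ℕ => q ^ ((r + 1) * m) / E q m := summable_Phi_term hq1 r
  have hs2 : Summable fun m : ℕ => q ^ ((r + 1 + 1) * m) / E q m := summable_Phi_term hq1 (r + 1)
  have hd : Summable fun m : ℕ => q ^ ((r + 1) * m) / E q m - q ^ ((r + 1 + 1) * m) / E q m :=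
    hs1.sub hs2
  have key : Phi q r - Phi q (r + 1) = q ^ (r + 1) * Phi q r := by
    have h1 : Phi q r - Phi q (r + 1)
        = ∑' m : ℕ, (q ^ ((r + 1) * m) / E q m - q ^ ((r + 1 + 1) * m) / E q m) := by
      rw [Phi, Phi, ← Summable.tsum_sub hs1 hs2]
    have h2 : ∀ m : ℕ, q ^ ((r + 1) * (m + 1)) / E q (m + 1)
        - q ^ ((r + 1 + 1) * (m + 1)) / E q (m + 1)
        = q ^ (r + 1) * (q ^ ((r + 1) * m) / E q m) := by
      intro m
      rw [E_succ q m]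
      have hne1 : (1 : ℂ) - q ^ (m + 1) ≠ 0 := one_sub_pow_ne hq1 m
      have hne2 : E q m ≠ 0 := E_ne_zero hq1 m
      field_simp
      ring
    rw [h1, Summable.tsum_eq_zero_add hd]
    simp only [Nat.mul_zero, pow_zero, E_zero]
    rw [tsum_congr h2, tsum_mul_left]
    rw [Phi]
    ring
  linear_combination -key

lemma Phi_eq_E_mul (hq1 : ‖q‖ < 1) (r : ℕ) : Phi q r = E q r * Phi q 0 := by
  induction r with
  | zero => rw [E_zero, one_mul]
  | succ r ih =>
    rw [Phi_succ hq1 r, ih, E_succ]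
    ring

lemma tendsto_Phi (hq1 : ‖q‖ < 1) : Tendsto (fun r => Phi q r) atTop (𝓝 1) := by
  have hb : Summable fun m : ℕ => (Real.exp (-(‖q‖ / (1 - ‖q‖) ^ 2)))⁻¹ * ‖q‖ ^ m :=
    ((summable_geometric_of_lt_one (norm_nonneg q) hq1)).mul_left _
  have key : Tendsto (fun r : ℕ => ∑' m : ℕ, q ^ ((r + 1) * m) / E q m) atTop
      (𝓝 (∑' m : ℕ, if m = 0 then (1 : ℂ) else 0)) := by
    apply tendsto_tsum_of_dominated_convergence hb
    · intro m
      rcases Nat.eq_zero_or_pos m with rfl | hm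
      · have : (fun r : ℕ => q ^ ((r + 1) * 0) / E q 0) = fun _ => (1 : ℂ) := by
          funext r; simp [E_zero]
        rw [this]
        simp only [if_pos rfl]
        exact tendsto_const_nhds
      · simp only [if_neg hm.ne']
        have h2 : Tendsto (fun r : ℕ => q ^ ((r + 1) * m)) atTop (𝓝 0) := by
          refine squeeze_zero_norm (fun r => ?_)
            (tendsto_pow_atTop_nhds_zero_of_lt_one (norm_nonneg q) hq1)
          rw [norm_pow]
          apply pow_le_pow_of_le_one (norm_nonneg q) hq1.le
          calc r ≤ r + 1 := Nat.le_succ r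
          _ ≤ (r + 1) * m := Nat.le_mul_of_pos_right _ hm
        simpa using h2.div_const (E q m)
    · exact Filter.Eventually.of_forall fun r m => Phi_term_bound hq1 r m
  have h3 : (∑' m : ℕ, if m = 0 then (1 : ℂ) else 0) = 1 := tsum_ite_eq 0 (fun _ => (1 : ℂ))
  rw [h3] at key
  exact key

lemma P_mul_Phi (hq1 : ‖q‖ < 1) (r : ℕ) : PP q * Phi q r = E q r := by
  have h1 : Tendsto (fun r : ℕ => E q r * Phi q 0) atTop (𝓝 (PP q * Phi q 0)) :=
    (tendsto_E_P hq1).mul_const _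
  have h2 : Tendsto (fun r : ℕ => Phi q r) atTop (𝓝 1) := tendsto_Phi hq1
  have h3 : (fun r : ℕ => Phi q r) = fun r : ℕ => E q r * Phi q 0 :=
    funext fun r => Phi_eq_E_mul hq1 r
  rw [h3] at h2
  have h4 : PP q * Phi q 0 = 1 := tendsto_nhds_unique h1 h2
  rw [Phi_eq_E_mul hq1 r]
  calc PP q * (E q r * Phi q 0) = E q r * (PP q * Phi q 0) := by ring
  _ = E q r := by rw [h4, mul_one]

/- ## The q-binomial generating function -/

lemma Bq_zero_left (hq1 : ‖q‖ < 1) (r : ℕ) : Bq q 0 r = 1 := by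
  rw [Bq, E_zero, Nat.zero_add, one_mul, div_self (E_ne_zero hq1 r)]

lemma Bq_zero_right (hq1 : ‖q‖ < 1) (j : ℕ) : Bq q j 0 = 1 := by
  rw [Bq, E_zero, Nat.add_zero, mul_one, div_self (E_ne_zero hq1 j)]

lemma norm_Bq_le (hq1 : ‖q‖ < 1) (j r : ℕ) :
    ‖Bq q j r‖ ≤ Real.exp (‖q‖ / (1 - ‖q‖)) * ((Real.exp (-(‖q‖ / (1 - ‖q‖) ^ 2)))⁻¹) ^ 2 := by
  have h1 : ‖E q (j + r)‖ ≤ Real.exp (‖q‖ / (1 - ‖q‖)) := norm_E_le hq1 _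
  have h2 : Real.exp (-(‖q‖ / (1 - ‖q‖) ^ 2)) * Real.exp (-(‖q‖ / (1 - ‖q‖) ^ 2))
      ≤ ‖E q j‖ * ‖E q r‖ :=
    mul_le_mul (exp_le_norm_E hq1 j) (exp_le_norm_E hq1 r) (Real.exp_pos _).le (norm_nonneg _)
  rw [Bq, norm_div, norm_mul]
  calc ‖E q (j + r)‖ / (‖E q j‖ * ‖E q r‖)
      ≤ Real.exp (‖q‖ / (1 - ‖q‖)) /
        (Real.exp (-(‖q‖ / (1 - ‖q‖) ^ 2)) * Real.exp (-(‖q‖ / (1 - ‖q‖) ^ 2))) :=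
        div_le_div₀ (Real.exp_pos _).le h1 (by positivity) h2
  _ = _ := by rw [div_eq_mul_inv, mul_inv]; ring

lemma Bq_pascal (hq1 : ‖q‖ < 1) (j r : ℕ) :
    Bq q (j + 1) (r + 1) = Bq q (j + 1) r + q ^ (r + 1) * Bq q j (r + 1) := by
  have hEj : E q j ≠ 0 := E_ne_zero hq1 j
  have hEr : E q r ≠ 0 := E_ne_zero hq1 r
  have h1 : (1 : ℂ) - q ^ (j + 1) ≠ 0 := one_sub_pow_ne hq1 j
  have h2 : (1 : ℂ) - q ^ (r + 1) ≠ 0 := one_sub_pow_ne hq1 r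
  rw [Bq, Bq, Bq]
  rw [show (j + 1) + (r + 1) = (j + (r + 1)) + 1 from by omega]
  rw [E_succ q (j + (r + 1))]
  rw [show (j + 1) + r = j + (r + 1) from by omega]
  rw [E_succ q j, E_succ q r]
  have hE3 : E q (j + (r + 1)) ≠ 0 := E_ne_zero hq1 _
  field_simp
  ring

lemma summable_g (hq1 : ‖q‖ < 1) (j : ℕ) {x : ℂ} (hx : ‖x‖ < 1) :
    Summable fun r : ℕ => Bq q j r * x ^ r := by
  apply summable_of_geom_bound (norm_nonneg x) hx
  intro r
  rw [norm_mul, norm_pow]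
  exact mul_le_mul_of_nonneg_right (norm_Bq_le hq1 j r) (pow_nonneg (norm_nonneg x) r)

lemma g_spec (hq1 : ‖q‖ < 1) (j : ℕ) :
    ∀ x : ℂ, ‖x‖ < 1 →
      (∑' r : ℕ, Bq q j r * x ^ r) * ∏ t ∈ Finset.range (j + 1), (1 - q ^ t * x) = 1 := by
  induction j with
  | zero =>
    intro x hx
    have hx1 : (1 : ℂ) - x ≠ 0 := by
      intro h
      rw [sub_eq_zero] at h
      rw [← h, norm_one] at hx
      exact lt_irrefl 1 hx
    have h1 : ∀ r : ℕ, Bq q 0 r * x ^ r = x ^ r := fun r => by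
      rw [Bq_zero_left hq1, one_mul]
    rw [tsum_congr h1, tsum_geometric_of_norm_lt_one hx]
    rw [show (0:ℕ) + 1 = 1 from rfl, Finset.range_one, Finset.prod_singleton, pow_zero, one_mul]
    exact inv_mul_cancel₀ hx1
  | succ j ih =>
    intro x hx
    have hqx : ‖q * x‖ < 1 := by
      rw [norm_mul]
      calc ‖q‖ * ‖x‖ ≤ 1 * ‖x‖ := mul_le_mul_of_nonneg_right hq1.le (norm_nonneg x)
      _ = ‖x‖ := one_mul _
      _ < 1 := hx
    have hsum1 : Summable fun r : ℕ => Bq q (j + 1) r * x ^ r := summable_g hq1 (j + 1) hx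
    have hsumG : Summable fun r : ℕ => Bq q j r * (q * x) ^ r := summable_g hq1 j hqx
    have hsumG' : Summable fun r : ℕ => Bq q j (r + 1) * (q * x) ^ (r + 1) := by
      have h := (summable_nat_add_iff (f := fun r : ℕ => Bq q j r * (q * x) ^ r) 1).2 hsumG
      exact h
    have key : (∑' r : ℕ, Bq q (j + 1) r * x ^ r) * (1 - x)
        = ∑' r : ℕ, Bq q j r * (q * x) ^ r := by
      have h0 : (∑' r : ℕ, Bq q (j + 1) r * x ^ r)
          = 1 + ∑' r : ℕ, Bq q (j + 1) (r + 1) * x ^ (r + 1) := by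
        rw [Summable.tsum_eq_zero_add hsum1, Bq_zero_right hq1, pow_zero, mul_one]
      have h2 : ∀ r : ℕ, Bq q (j + 1) (r + 1) * x ^ (r + 1)
          = x * (Bq q (j + 1) r * x ^ r) + Bq q j (r + 1) * (q * x) ^ (r + 1) := by
        intro r
        rw [Bq_pascal hq1 j r]
        ring
      have hG0 : (∑' r : ℕ, Bq q j r * (q * x) ^ r)
          = 1 + ∑' r : ℕ, Bq q j (r + 1) * (q * x) ^ (r + 1) := by
        rw [Summable.tsum_eq_zero_add hsumG, Bq_zero_right hq1, pow_zero, mul_one]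
      have h3 : (∑' r : ℕ, Bq q (j + 1) (r + 1) * x ^ (r + 1))
          = x * (∑' r : ℕ, Bq q (j + 1) r * x ^ r)
            + ∑' r : ℕ, Bq q j (r + 1) * (q * x) ^ (r + 1) := by
        rw [tsum_congr h2, Summable.tsum_add (hsum1.mul_left x) hsumG', tsum_mul_left]
      have h4 := h0
      rw [h3] at h4
      have h5 : (∑' r : ℕ, Bq q j (r + 1) * (q * x) ^ (r + 1))
          = (∑' r : ℕ, Bq q j r * (q * x) ^ r) - 1 := by
        rw [hG0]; ring
      rw [h5] at h4
      linear_combination h4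
    have hprod : ∏ t ∈ Finset.range (j + 1 + 1), (1 - q ^ t * x)
        = (∏ t ∈ Finset.range (j + 1), (1 - q ^ t * (q * x))) * (1 - x) := by
      rw [Finset.prod_range_succ']
      congr 1
      · apply Finset.prod_congr rfl
        intro t _
        congr 1
        ring
      · rw [pow_zero, one_mul]
    rw [hprod]
    calc (∑' r : ℕ, Bq q (j + 1) r * x ^ r)
          * ((∏ t ∈ Finset.range (j + 1), (1 - q ^ t * (q * x))) * (1 - x))
        = ((∑' r : ℕ, Bq q (j + 1) r * x ^ r) * (1 - x))
          * ∏ t ∈ Finset.range (j + 1), (1 - q ^ t * (q * x)) := by ring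
    _ = (∑' r : ℕ, Bq q j r * (q * x) ^ r)
          * ∏ t ∈ Finset.range (j + 1), (1 - q ^ t * (q * x)) := by rw [key]
    _ = 1 := ih (q * x) hqx

/- ## Fubini: F in terms of U -/

set_option maxHeartbeats 1000000 in
lemma F_eq (hq1 : ‖q‖ < 1) (j : ℕ) : PP q * (E q j * Fj q j) = U q j := by
  have h0 : (0:ℝ) ≤ ‖q‖ := norm_nonneg q
  have hccpos : (0:ℝ) < Real.exp (-(‖q‖ / (1 - ‖q‖) ^ 2)) := Real.exp_pos _
  have hb1 : ∀ m : ℕ, ‖q ^ m / E q m‖ ≤ (Real.exp (-(‖q‖ / (1 - ‖q‖) ^ 2)))⁻¹ * ‖q‖ ^ m := by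
    intro m
    rw [norm_div, norm_pow, div_eq_mul_inv, mul_comm]
    exact mul_le_mul_of_nonneg_right (inv_anti₀ hccpos (exp_le_norm_E hq1 m))
      (pow_nonneg h0 m)
  have hb2 : ∀ m r : ℕ, ‖Bq q j r * q ^ ((j + m + 1) * r)‖ ≤
      (Real.exp (‖q‖ / (1 - ‖q‖)) * ((Real.exp (-(‖q‖ / (1 - ‖q‖) ^ 2)))⁻¹) ^ 2) * ‖q‖ ^ r := by
    intro m r
    rw [norm_mul, norm_pow]
    exact mul_le_mul (norm_Bq_le hq1 j r)
      (pow_le_pow_of_le_one h0 hq1.le (Nat.le_mul_of_pos_left r (by omega)))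
      (pow_nonneg h0 _) (by positivity)
  have hbfull : ∀ m r : ℕ, ‖(q ^ m / E q m) * (Bq q j r * q ^ ((j + m + 1) * r))‖ ≤
      ((Real.exp (-(‖q‖ / (1 - ‖q‖) ^ 2)))⁻¹ * ‖q‖ ^ m) *
      ((Real.exp (‖q‖ / (1 - ‖q‖)) * ((Real.exp (-(‖q‖ / (1 - ‖q‖) ^ 2)))⁻¹) ^ 2) * ‖q‖ ^ r) := by
    intro m r
    rw [norm_mul]
    exact mul_le_mul (hb1 m) (hb2 m r) (norm_nonneg _) (by positivity)
  have hsnorm : Summable fun p : ℕ × ℕ =>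
      ((Real.exp (-(‖q‖ / (1 - ‖q‖) ^ 2)))⁻¹ * ‖q‖ ^ p.1) *
      ((Real.exp (‖q‖ / (1 - ‖q‖)) * ((Real.exp (-(‖q‖ / (1 - ‖q‖) ^ 2)))⁻¹) ^ 2) * ‖q‖ ^ p.2) :=
    Summable.mul_of_nonneg (((summable_geometric_of_lt_one h0 hq1)).mul_left _)
      (((summable_geometric_of_lt_one h0 hq1)).mul_left _)
      (fun m => by positivity) (fun r => by positivity)
  have hsh : Summable (Function.uncurry fun m r : ℕ =>
      (q ^ m / E q m) * (Bq q j r * q ^ ((j + m + 1) * r))) := by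
    apply Summable.of_norm
    apply Summable.of_nonneg_of_le (fun p => norm_nonneg _) _ hsnorm
    intro p
    exact hbfull p.1 p.2
  have hrow : ∀ m : ℕ, Summable fun r : ℕ =>
      (q ^ m / E q m) * (Bq q j r * q ^ ((j + m + 1) * r)) := by
    intro m
    apply Summable.mul_left
    apply summable_of_geom_bound h0 hq1
    exact fun r => hb2 m r
  have hcol : ∀ r : ℕ, Summable fun m : ℕ =>
      (q ^ m / E q m) * (Bq q j r * q ^ ((j + m + 1) * r)) := by
    intro r
    apply summable_of_geom_bound h0 hq1
      (K := ((Real.exp (-(‖q‖ / (1 - ‖q‖) ^ 2)))⁻¹) *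
        ((Real.exp (‖q‖ / (1 - ‖q‖)) * ((Real.exp (-(‖q‖ / (1 - ‖q‖) ^ 2)))⁻¹) ^ 2) * ‖q‖ ^ r))
    intro m
    calc ‖(q ^ m / E q m) * (Bq q j r * q ^ ((j + m + 1) * r))‖
        ≤ ((Real.exp (-(‖q‖ / (1 - ‖q‖) ^ 2)))⁻¹ * ‖q‖ ^ m) *
          ((Real.exp (‖q‖ / (1 - ‖q‖)) * ((Real.exp (-(‖q‖ / (1 - ‖q‖) ^ 2)))⁻¹) ^ 2) * ‖q‖ ^ r) :=
          hbfull m r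
    _ = _ := by ring
  have hA : Fj q j = ∑' (m : ℕ) (r : ℕ),
      (q ^ m / E q m) * (Bq q j r * q ^ ((j + m + 1) * r)) := by
    rw [Fj]
    apply tsum_congr
    intro m
    have hx : ‖q ^ (j + m + 1)‖ < 1 := by
      rw [norm_pow]
      exact pow_lt_one₀ h0 hq1 (by omega)
    have hg := g_spec hq1 j (q ^ (j + m + 1)) hx
    have hPi_ne : (∏ t ∈ Finset.range (j + 1), (1 - q ^ t * q ^ (j + m + 1))) ≠ 0 := by
      intro hz
      rw [hz, mul_zero] at hg
      exact zero_ne_one hg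
    have hE2 : E q (2 * j + m + 1)
        = E q (j + m) * ∏ t ∈ Finset.range (j + 1), (1 - q ^ t * q ^ (j + m + 1)) := by
      have h3 := E_add q (j + m) (j + 1)
      rw [show (j + m) + (j + 1) = 2 * j + m + 1 from by omega] at h3
      rw [h3]
      congr 1
      apply Finset.prod_congr rfl
      intro t _
      congr 1
      rw [← pow_add]
      congr 1
      omega
    have hgval : (∑' r : ℕ, Bq q j r * (q ^ (j + m + 1)) ^ r)
        = (∏ t ∈ Finset.range (j + 1), (1 - q ^ t * q ^ (j + m + 1)))⁻¹ :=
      eq_inv_of_mul_eq_one_left hg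
    have hEm := E_ne_zero hq1 m
    have hEjm := E_ne_zero hq1 (j + m)
    calc q ^ m * E q (j + m) / (E q m * E q (2 * j + m + 1))
        = (q ^ m / E q m) *
          (∏ t ∈ Finset.range (j + 1), (1 - q ^ t * q ^ (j + m + 1)))⁻¹ := by
          rw [hE2]
          generalize (∏ t ∈ Finset.range (j + 1), (1 - q ^ t * q ^ (j + m + 1))) = P at hPi_ne ⊢
          field_simp
    _ = (q ^ m / E q m) * ∑' r : ℕ, Bq q j r * (q ^ (j + m + 1)) ^ r := by rw [hgval]
    _ = ∑' r : ℕ, (q ^ m / E q m) * (Bq q j r * q ^ ((j + m + 1) * r)) := by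
          rw [tsum_mul_left]
          congr 1
          apply tsum_congr
          intro r
          rw [pow_mul]
  have hC : ∀ r : ℕ, (∑' m : ℕ, (q ^ m / E q m) * (Bq q j r * q ^ ((j + m + 1) * r)))
      = Bq q j r * q ^ ((j + 1) * r) * Phi q r := by
    intro r
    rw [Phi, ← tsum_mul_left]
    apply tsum_congr
    intro m
    rw [show (j + m + 1) * r = (j + 1) * r + m * r from by ring, pow_add,
        show (r + 1) * m = m + m * r from by ring, pow_add]
    ring
  rw [hA, ← Summable.tsum_comm' hsh hrow hcol, tsum_congr hC]
  rw [U, ← tsum_mul_left, ← tsum_mul_left]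
  apply tsum_congr
  intro r
  have h4 := P_mul_Phi hq1 r
  have hEj := E_ne_zero hq1 j
  have hEr := E_ne_zero hq1 r
  calc PP q * (E q j * (Bq q j r * q ^ ((j + 1) * r) * Phi q r))
      = q ^ ((j + 1) * r) * (E q j * Bq q j r * (PP q * Phi q r)) := by ring
  _ = q ^ ((j + 1) * r) * (E q j * Bq q j r * E q r) := by rw [h4]
  _ = q ^ ((j + 1) * r) * E q (j + r) := by
      congr 1
      rw [Bq]
      field_simp

/- ## The U recurrence -/

lemma U_rec (hq1 : ‖q‖ < 1) (j : ℕ) :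
    (1 - q ^ (j + 1)) * U q j = (1 - q ^ (2 * j + 2)) * E q j - q ^ (3 * j + 4) * U q (j + 1) := by
  have h0 : (0:ℝ) ≤ ‖q‖ := norm_nonneg q
  have hsU : Summable fun r : ℕ => q ^ ((j + 1) * r) * E q (j + r) := summable_U_term hq1 j
  have hsA : Summable fun r : ℕ => q ^ ((j + 1) * r) * E q (j + 1 + r) := by
    apply summable_of_geom_bound h0 hq1 (K := Real.exp (‖q‖ / (1 - ‖q‖)))
    intro r
    rw [norm_mul, norm_pow]
    calc ‖q‖ ^ ((j + 1) * r) * ‖E q (j + 1 + r)‖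
        ≤ ‖q‖ ^ r * Real.exp (‖q‖ / (1 - ‖q‖)) :=
          mul_le_mul (pow_le_pow_of_le_one h0 hq1.le (Nat.le_mul_of_pos_left r (Nat.succ_pos j)))
            (norm_E_le hq1 _) (norm_nonneg _) (pow_nonneg h0 r)
    _ = _ := mul_comm _ _
  have hsW : Summable fun r : ℕ => q ^ ((j + 2) * r) * E q (j + r) := by
    apply summable_of_geom_bound h0 hq1 (K := Real.exp (‖q‖ / (1 - ‖q‖)))
    intro r
    rw [norm_mul, norm_pow]
    calc ‖q‖ ^ ((j + 2) * r) * ‖E q (j + r)‖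
        ≤ ‖q‖ ^ r * Real.exp (‖q‖ / (1 - ‖q‖)) :=
          mul_le_mul (pow_le_pow_of_le_one h0 hq1.le (Nat.le_mul_of_pos_left r (by omega)))
            (norm_E_le hq1 _) (norm_nonneg _) (pow_nonneg h0 r)
    _ = _ := mul_comm _ _
  have hi : U q j = E q j + q ^ (j + 1) * ∑' r : ℕ, q ^ ((j + 1) * r) * E q (j + 1 + r) := by
    rw [U, Summable.tsum_eq_zero_add hsU]
    congr 1
    · rw [Nat.mul_zero, pow_zero, one_mul, Nat.add_zero]
    · rw [← tsum_mul_left]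
      apply tsum_congr
      intro r
      rw [show j + (r + 1) = j + 1 + r from by omega]
      ring
  have hii : (∑' r : ℕ, q ^ ((j + 1) * r) * E q (j + 1 + r))
      = U q j - q ^ (j + 1) * ∑' r : ℕ, q ^ ((j + 2) * r) * E q (j + r) := by
    have hper : ∀ r : ℕ, q ^ ((j + 1) * r) * E q (j + 1 + r)
        = q ^ ((j + 1) * r) * E q (j + r) - q ^ (j + 1) * (q ^ ((j + 2) * r) * E q (j + r)) := by
      intro r
      rw [show j + 1 + r = (j + r) + 1 from by omega, E_succ]
      ring
    rw [tsum_congr hper, Summable.tsum_sub hsU (hsW.mul_left _), tsum_mul_left, U]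
  have hiii : (∑' r : ℕ, q ^ ((j + 2) * r) * E q (j + r))
      = E q j + q ^ (j + 2) * U q (j + 1) := by
    rw [Summable.tsum_eq_zero_add hsW]
    congr 1
    · rw [Nat.mul_zero, pow_zero, one_mul, Nat.add_zero]
    · rw [U, ← tsum_mul_left]
      apply tsum_congr
      intro r
      rw [show j + (r + 1) = (j + 1) + r from by omega]
      ring
  rw [hii, hiii] at hi
  linear_combination hi

/- ## NJ arithmetic -/

lemma NJ_mul_two (j : ℕ) : 2 * NJ j = (j + 1) * (3 * j + 2) := by
  have h : (j + 1) * (3 * j + 2) = j * (j + 1) + 2 * ((j + 1) * (j + 1)) := by ring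
  have he : Even ((j + 1) * (3 * j + 2)) := by
    rw [h]
    exact (Nat.even_mul_succ_self j).add (even_two_mul _)
  obtain ⟨t, ht⟩ := he
  rw [NJ]
  generalize hX : (j + 1) * (3 * j + 2) = X at ht ⊢
  omega

lemma NJ_succ (j : ℕ) : NJ (j + 1) = NJ j + (3 * j + 4) := by
  have h : (j + 1 + 1) * (3 * (j + 1) + 2) = (j + 1) * (3 * j + 2) + 2 * (3 * j + 4) := by ring
  rw [NJ, NJ, h, Nat.add_mul_div_left _ _ two_pos]

lemma le_NJ (j : ℕ) : j ≤ NJ j := by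
  have h := NJ_mul_two j
  nlinarith [h]

/- ## Theta-side lemmas -/

lemma theta_exp_ge (k : ℤ) : (k.natAbs : ℤ) ≤ k * (3 * k + 1) / 2 := by
  have h2 : (0:ℤ) < 2 := by norm_num
  rw [Int.le_ediv_iff_mul_le h2]
  rcases lt_trichotomy k 0 with hk | hk | hk
  · have hn : (k.natAbs : ℤ) = -k := by omega
    rw [hn]
    nlinarith [mul_nonneg (by omega : (0:ℤ) ≤ -k) (by omega : (0:ℤ) ≤ -k - 1)]
  · subst hk
    simp
  · have hn : (k.natAbs : ℤ) = k := by omega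
    rw [hn]
    nlinarith [mul_nonneg (by omega : (0:ℤ) ≤ k) (by omega : (0:ℤ) ≤ 3 * k - 1)]

lemma norm_theta_le (hq0 : 0 < ‖q‖) (hq1 : ‖q‖ < 1) (k : ℤ) :
    ‖(-1 : ℂ) ^ k * q ^ (k * (3 * k + 1) / 2)‖ ≤ ‖q‖ ^ k.natAbs := by
  rw [norm_mul, norm_zpow, norm_zpow, norm_neg, norm_one, one_zpow, one_mul]
  have h := zpow_le_zpow_right_of_le_one₀ hq0 hq1.le (theta_exp_ge k)
  rwa [zpow_natCast] at h

lemma summable_bnd (hq1 : ‖q‖ < 1) : Summable fun k : ℤ => ‖q‖ ^ k.natAbs := by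
  apply Summable.of_nat_of_neg_add_one
  · have heq : (fun n : ℕ => ‖q‖ ^ ((n : ℤ)).natAbs) = fun n : ℕ => ‖q‖ ^ n := by
      funext n
      rw [Int.natAbs_natCast]
    rw [heq]
    exact summable_geometric_of_lt_one (norm_nonneg q) hq1
  · have heq : (fun n : ℕ => ‖q‖ ^ ((-((n : ℤ) + 1))).natAbs) = fun n : ℕ => ‖q‖ ^ n * ‖q‖ := by
      funext n
      have h : ((-((n : ℤ) + 1))).natAbs = n + 1 := by omega
      rw [h, pow_succ]
    rw [heq]
    exact (summable_geometric_of_lt_one (norm_nonneg q) hq1).mul_right ‖q‖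

lemma summable_theta_norm (hq0 : 0 < ‖q‖) (hq1 : ‖q‖ < 1) (j : ℕ) :
    Summable fun k : ℤ =>
      ‖(if (j : ℤ) < |k| then (-1 : ℂ) ^ k * q ^ (k * (3 * k + 1) / 2) else 0)‖ := by
  apply Summable.of_nonneg_of_le (fun k => norm_nonneg _) _ (summable_bnd hq1)
  intro k
  by_cases h : (j : ℤ) < |k|
  · rw [if_pos h]
    exact norm_theta_le hq0 hq1 k
  · rw [if_neg h, norm_zero]
    exact pow_nonneg (norm_nonneg q) _

lemma summable_theta (hq0 : 0 < ‖q‖) (hq1 : ‖q‖ < 1) (j : ℕ) :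
    Summable fun k : ℤ =>
      (if (j : ℤ) < |k| then (-1 : ℂ) ^ k * q ^ (k * (3 * k + 1) / 2) else 0) :=
  (summable_theta_norm hq0 hq1 j).of_norm

lemma T_sub (hq0 : 0 < ‖q‖) (hq1 : ‖q‖ < 1) (j : ℕ) :
    Tt q j - Tt q (j + 1) = (-1 : ℂ) ^ (j + 1) * (q ^ NJ j + q ^ (NJ j + (j + 1))) := by
  have hs1 := summable_theta hq0 hq1 j
  have hs2 := summable_theta hq0 hq1 (j + 1)
  rw [Tt, Tt, ← Summable.tsum_sub hs1 hs2]
  have hpt : ∀ k : ℤ, ((if (j : ℤ) < |k| then (-1 : ℂ) ^ k * q ^ (k * (3 * k + 1) / 2) else 0) -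
      (if ((j + 1 : ℕ) : ℤ) < |k| then (-1 : ℂ) ^ k * q ^ (k * (3 * k + 1) / 2) else 0))
      = (if (k.natAbs : ℤ) = (j : ℤ) + 1 then (-1 : ℂ) ^ k * q ^ (k * (3 * k + 1) / 2) else 0) := by
    intro k
    have habs : |k| = (k.natAbs : ℤ) := Int.abs_eq_natAbs k
    have hc : ((j + 1 : ℕ) : ℤ) = (j : ℤ) + 1 := by push_cast; ring
    rw [habs, hc]
    by_cases h1 : (j : ℤ) < (k.natAbs : ℤ)
    · by_cases h2 : (j : ℤ) + 1 < (k.natAbs : ℤ)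
      · rw [if_pos h1, if_pos h2, if_neg (by omega), sub_self]
      · rw [if_pos h1, if_neg h2, if_pos (by omega), sub_zero]
    · rw [if_neg h1, if_neg (by omega), if_neg (by omega), sub_zero]
  rw [tsum_congr hpt]
  have hne : ((j : ℤ) + 1) ≠ -((j : ℤ) + 1) := by omega
  rw [tsum_eq_sum (s := {(j : ℤ) + 1, -((j : ℤ) + 1)}) ?_]
  · rw [Finset.sum_pair hne]
    have hNJint : (2 : ℤ) * (NJ j : ℤ) = ((j : ℤ) + 1) * (3 * (j : ℤ) + 2) := by
      exact_mod_cast NJ_mul_two j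
    have he1 : ((j : ℤ) + 1) * (3 * ((j : ℤ) + 1) + 1) / 2 = ((NJ j + (j + 1) : ℕ) : ℤ) := by
      have hA : ((j : ℤ) + 1) * (3 * ((j : ℤ) + 1) + 1) = 2 * ((NJ j + (j + 1) : ℕ) : ℤ) := by
        push_cast
        linear_combination -hNJint
      rw [hA, Int.mul_ediv_cancel_left _ (by norm_num : (2:ℤ) ≠ 0)]
    have he2 : (-((j : ℤ) + 1)) * (3 * (-((j : ℤ) + 1)) + 1) / 2 = ((NJ j : ℕ) : ℤ) := by
      have hB : (-((j : ℤ) + 1)) * (3 * (-((j : ℤ) + 1)) + 1) = 2 * ((NJ j : ℕ) : ℤ) := by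
        linear_combination -hNJint
      rw [hB, Int.mul_ediv_cancel_left _ (by norm_num : (2:ℤ) ≠ 0)]
    have hcast : ((j : ℤ) + 1) = ((j + 1 : ℕ) : ℤ) := by push_cast; ring
    have hsgn1 : (-1 : ℂ) ^ ((j : ℤ) + 1) = (-1 : ℂ) ^ (j + 1) := by
      rw [hcast, zpow_natCast]
    have hsq : ((-1 : ℂ) ^ (j + 1)) * ((-1 : ℂ) ^ (j + 1)) = 1 := by
      rw [← mul_pow]
      norm_num
    have hsgn2 : (-1 : ℂ) ^ (-((j : ℤ) + 1)) = (-1 : ℂ) ^ (j + 1) := by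
      rw [zpow_neg, hsgn1]
      exact inv_eq_of_mul_eq_one_right hsq
    rw [if_pos (by omega : ((((j : ℤ) + 1)).natAbs : ℤ) = (j : ℤ) + 1),
        if_pos (by omega : (((-((j : ℤ) + 1))).natAbs : ℤ) = (j : ℤ) + 1)]
    rw [he1, he2, hsgn1, hsgn2, zpow_natCast, zpow_natCast]
    ring
  · intro k hk
    apply if_neg
    intro habs
    apply hk
    simp only [Finset.mem_insert, Finset.mem_singleton]
    omega

lemma tendsto_T (hq0 : 0 < ‖q‖) (hq1 : ‖q‖ < 1) : Tendsto (Tt q) atTop (𝓝 0) := by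
  have hb : Summable fun k : ℤ => ‖q‖ ^ k.natAbs := summable_bnd hq1
  have key : Tendsto (fun j : ℕ => ∑' k : ℤ,
      (if (j : ℤ) < |k| then (-1 : ℂ) ^ k * q ^ (k * (3 * k + 1) / 2) else 0)) atTop
      (𝓝 (∑' _ : ℤ, (0 : ℂ))) := by
    apply tendsto_tsum_of_dominated_convergence hb
    · intro k
      apply Tendsto.congr' _ tendsto_const_nhds
      filter_upwards [eventually_ge_atTop k.natAbs] with j hj
      rw [if_neg]
      rw [Int.abs_eq_natAbs]
      omega
    · apply Filter.Eventually.of_forall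
      intro j k
      by_cases h : (j : ℤ) < |k|
      · rw [if_pos h]
        exact norm_theta_le hq0 hq1 k
      · rw [if_neg h, norm_zero]
        exact pow_nonneg (norm_nonneg q) _
  rw [tsum_zero] at key
  exact key

/- ## R-side lemmas -/

lemma R_sub (hq1 : ‖q‖ < 1) (j : ℕ) :
    Rr q j - Rr q (j + 1) = (-1 : ℂ) ^ (j + 1) * (q ^ NJ j + q ^ (NJ j + (j + 1))) := by
  have hEj1 : E q (j + 1) ≠ 0 := E_ne_zero hq1 (j + 1)
  have hEj : E q j ≠ 0 := E_ne_zero hq1 j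
  have hfac : (1 : ℂ) - q ^ (j + 1) ≠ 0 := one_sub_pow_ne hq1 j
  have hrec := U_rec hq1 j
  have hE1 : E q (j + 1) = E q j * (1 - q ^ (j + 1)) := E_succ q j
  have hkey : U q j / E q j = (1 + q ^ (j + 1)) - q ^ (3 * j + 4) * (U q (j + 1) / E q (j + 1)) := by
    rw [hE1]
    field_simp
    linear_combination hrec
  rw [Rr, Rr, hkey, NJ_succ, pow_add]
  ring

lemma tendsto_R (hq1 : ‖q‖ < 1) : Tendsto (Rr q) atTop (𝓝 0) := by
  have h0 : (0:ℝ) ≤ ‖q‖ := norm_nonneg q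
  have hccpos : (0:ℝ) < Real.exp (-(‖q‖ / (1 - ‖q‖) ^ 2)) := Real.exp_pos _
  have htend : Tendsto (fun j : ℕ => Real.exp (‖q‖ / (1 - ‖q‖)) * (1 - ‖q‖)⁻¹ /
      Real.exp (-(‖q‖ / (1 - ‖q‖) ^ 2)) * ‖q‖ ^ j) atTop (𝓝 0) := by
    have h5 := (tendsto_pow_atTop_nhds_zero_of_lt_one h0 hq1).const_mul
      (Real.exp (‖q‖ / (1 - ‖q‖)) * (1 - ‖q‖)⁻¹ / Real.exp (-(‖q‖ / (1 - ‖q‖) ^ 2)))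
    simpa using h5
  have h1q : (0:ℝ) < 1 - ‖q‖ := by linarith
  refine squeeze_zero_norm (fun j => ?_) htend
  rw [Rr, norm_mul, norm_mul, norm_pow, norm_pow, norm_neg, norm_one, one_pow, one_mul,
      norm_div]
  calc ‖q‖ ^ NJ j * (‖U q j‖ / ‖E q j‖)
      ≤ ‖q‖ ^ j * (Real.exp (‖q‖ / (1 - ‖q‖)) * (1 - ‖q‖)⁻¹ / Real.exp (-(‖q‖ / (1 - ‖q‖) ^ 2))) := by
        apply mul_le_mul (pow_le_pow_of_le_one h0 hq1.le (le_NJ j))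
          (div_le_div₀ (mul_nonneg (Real.exp_pos _).le (inv_nonneg.2 h1q.le))
            (norm_U_le hq1 j) hccpos (exp_le_norm_E hq1 j))
          (by positivity) (by positivity)
  _ = Real.exp (‖q‖ / (1 - ‖q‖)) * (1 - ‖q‖)⁻¹ / Real.exp (-(‖q‖ / (1 - ‖q‖) ^ 2)) * ‖q‖ ^ j := by
        ring

lemma T_eq_R (hq0 : 0 < ‖q‖) (hq1 : ‖q‖ < 1) (j : ℕ) : Tt q j = Rr q j := by
  have hD : ∀ i : ℕ, (Tt q i - Rr q i) = (Tt q (i + 1) - Rr q (i + 1)) := by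
    intro i
    have h1 := T_sub hq0 hq1 i
    have h2 := R_sub hq1 i
    have h2' : Rr q i - Rr q (i + 1) = (-1 : ℂ) ^ (i + 1) * (q ^ NJ i + q ^ (NJ i + (i + 1))) := h2
    linear_combination h1 - h2'
  have hDn : ∀ n : ℕ, Tt q j - Rr q j = Tt q (j + n) - Rr q (j + n) := by
    intro n
    induction n with
    | zero => rfl
    | succ n ih => rw [ih, show j + (n + 1) = (j + n) + 1 from rfl]; exact hD (j + n)
  have ht : Tendsto (fun n : ℕ => j + n) atTop atTop :=
    tendsto_atTop_mono (fun n => Nat.le_add_left n j) tendsto_id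
  have hlim : Tendsto (fun n : ℕ => Tt q (j + n) - Rr q (j + n)) atTop (𝓝 0) := by
    have h3 := ((tendsto_T hq0 hq1).comp ht).sub ((tendsto_R hq1).comp ht)
    simpa using h3
  have hconst : Tendsto (fun _ : ℕ => Tt q j - Rr q j) atTop (𝓝 (Tt q j - Rr q j)) :=
    tendsto_const_nhds
  have hz : Tt q j - Rr q j = 0 :=
    tendsto_nhds_unique (hconst.congr fun n => hDn n) hlim
  exact sub_eq_zero.1 hz

/- ## Assembly -/

lemma qPoch_eq_E (q : ℂ) (n : ℕ) : qPoch q q n = E q n := by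
  rw [qPoch, E]
  apply Finset.prod_congr rfl
  intro l _
  rw [← pow_succ']

lemma qPoch_shift (q : ℂ) (i : ℕ) :
    E q i * qPoch (q ^ (i + 1)) q i = E q (2 * i) := by
  rw [show 2 * i = i + i from (two_mul i), E_add q i i, qPoch]
  congr 1
  apply Finset.prod_congr rfl
  intro l _
  congr 1
  rw [← pow_add]
  congr 1
  omega

lemma alg_aux (S A B C u v P2 Em E1 Ej : ℂ) (hC : C ≠ 0) (hEm : Em ≠ 0) (hE1 : E1 ≠ 0)
    (hP2 : P2 ≠ 0) (hEj : Ej ≠ 0) (hv : v ≠ 0) :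
    S * (A * B / C * (P2 / (Em * E1)) * (u / v) * (C / (P2 / Ej)))
      = S * A * u * (B * Ej / (Em * (E1 * v))) := by
  have hden1 : C * (Em * E1) * v * P2 ≠ 0 :=
    mul_ne_zero (mul_ne_zero (mul_ne_zero hC (mul_ne_zero hEm hE1)) hv) hP2
  have hden2 : Em * (E1 * v) ≠ 0 := mul_ne_zero hEm (mul_ne_zero hE1 hv)
  rw [show S * (A * B / C * (P2 / (Em * E1)) * (u / v) * (C / (P2 / Ej)))
      = (S * (A * B * (P2 * (u * (C * Ej))))) / (C * (Em * E1) * v * P2) from by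
        rw [div_div_eq_mul_div]; ring,
      show S * A * u * (B * Ej / (Em * (E1 * v))) = (S * A * u * (B * Ej)) / (Em * (E1 * v)) from by
        ring,
      div_eq_div_iff hden1 hden2]
  ring

lemma Fj_term_bound (hq1 : ‖q‖ < 1) (j m : ℕ) :
    ‖q ^ m * E q (j + m) / (E q m * E q (2 * j + m + 1))‖ ≤
      (Real.exp (‖q‖ / (1 - ‖q‖)) * ((Real.exp (-(‖q‖ / (1 - ‖q‖) ^ 2)))⁻¹) ^ 2) * ‖q‖ ^ m := by
  have h0 : (0:ℝ) ≤ ‖q‖ := norm_nonneg q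
  have hcc : (0:ℝ) < Real.exp (-(‖q‖ / (1 - ‖q‖) ^ 2)) := Real.exp_pos _
  rw [norm_div, norm_mul, norm_mul, norm_pow]
  calc ‖q‖ ^ m * ‖E q (j + m)‖ / (‖E q m‖ * ‖E q (2 * j + m + 1)‖)
      ≤ (‖q‖ ^ m * Real.exp (‖q‖ / (1 - ‖q‖))) /
        (Real.exp (-(‖q‖ / (1 - ‖q‖) ^ 2)) * Real.exp (-(‖q‖ / (1 - ‖q‖) ^ 2))) := by
        apply div_le_div₀ (by positivity)
          (mul_le_mul_of_nonneg_left (norm_E_le hq1 _) (pow_nonneg h0 m))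
          (by positivity)
          (mul_le_mul (exp_le_norm_E hq1 _) (exp_le_norm_E hq1 _) hcc.le (norm_nonneg _))
  _ = _ := by rw [div_eq_mul_inv, mul_inv]; ring

lemma summand_eq (hq0 : 0 < ‖q‖) (hq1 : ‖q‖ < 1) (j m : ℕ) :
    (-1 : ℂ) ^ (j + m + j) *
        q ^ (-((((j + m : ℤ) - j) * ((j + m : ℤ) + j - 1)) / 2)) *
        qBinom q (2 * (j + m)) ((j + m) - j) *
        (qInt q (2 * j + 1) / qInt q ((j + m) + j + 1)) *
        ((-1 : ℂ) ^ (j + m) * q ^ ((j + m) * ((j + m) + 1) / 2) /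
          qPoch (q ^ ((j + m) + 1)) q (j + m))
      = ((-1 : ℂ) ^ j * q ^ (j * (j + 1) / 2) * (1 - q ^ (2 * j + 1))) *
          (q ^ m * E q (j + m) / (E q m * E q (2 * j + m + 1))) := by
  have hq : q ≠ 0 := fun h => by rw [h, norm_zero] at hq0; exact lt_irrefl 0 hq0
  have h1q : (1 : ℂ) - q ≠ 0 := by
    intro h
    rw [sub_eq_zero] at h
    rw [← h, norm_one] at hq1
    exact lt_irrefl 1 hq1
  have hd1 : 2 ∣ (j + m) * ((j + m) + 1) := even_iff_two_dvd.mp (Nat.even_mul_succ_self (j + m))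
  have ht1 : 2 * ((j + m) * ((j + m) + 1) / 2) = (j + m) * ((j + m) + 1) := Nat.mul_div_cancel' hd1
  have hd2 : 2 ∣ j * (j + 1) := even_iff_two_dvd.mp (Nat.even_mul_succ_self j)
  have ht2 : 2 * (j * (j + 1) / 2) = j * (j + 1) := Nat.mul_div_cancel' hd2
  have ht1' : (2:ℤ) * (((j + m) * ((j + m) + 1) / 2 : ℕ) : ℤ) = ((j:ℤ) + m) * (((j:ℤ) + m) + 1) := by
    exact_mod_cast ht1
  have ht2' : (2:ℤ) * ((j * (j + 1) / 2 : ℕ) : ℤ) = (j:ℤ) * ((j:ℤ) + 1) := by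
    exact_mod_cast ht2
  have hzexp : (-((((j + m : ℤ) - j) * ((j + m : ℤ) + j - 1)) / 2))
      = (((j * (j + 1) / 2 : ℕ) : ℤ) + m) - (((j + m) * ((j + m) + 1) / 2 : ℕ) : ℤ) := by
    have hnum : (((j + m : ℤ) - j) * ((j + m : ℤ) + j - 1))
        = 2 * ((((j + m) * ((j + m) + 1) / 2 : ℕ) : ℤ) - ((j * (j + 1) / 2 : ℕ) : ℤ) - m) := by
      linear_combination ht2' - ht1'
    rw [hnum, Int.mul_ediv_cancel_left _ (by norm_num : (2:ℤ) ≠ 0)]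
    ring
  have hz : q ^ (-((((j + m : ℤ) - j) * ((j + m : ℤ) + j - 1)) / 2))
      = q ^ (j * (j + 1) / 2) * q ^ m / q ^ ((j + m) * ((j + m) + 1) / 2) := by
    rw [hzexp, zpow_sub₀ hq, zpow_add₀ hq, zpow_natCast, zpow_natCast, zpow_natCast]
  have hsub : (j + m) - j = m := by omega
  have hbin : qBinom q (2 * (j + m)) ((j + m) - j) = E q (2 * (j + m)) / (E q m * E q (2 * j + m)) := by
    rw [hsub, qBinom, qPoch_eq_E, qPoch_eq_E, qPoch_eq_E,
      show 2 * (j + m) - m = 2 * j + m from by omega]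
  have hqint : qInt q (2 * j + 1) / qInt q ((j + m) + j + 1)
      = (1 - q ^ (2 * j + 1)) / (1 - q ^ (2 * j + m + 1)) := by
    rw [qInt, qInt, show (j + m) + j + 1 = 2 * j + m + 1 from by omega, div_div_div_comm,
      div_self h1q, div_one]
  have hEjm := E_ne_zero hq1 (j + m)
  have hpoch : qPoch (q ^ ((j + m) + 1)) q (j + m) = E q (2 * (j + m)) / E q (j + m) := by
    rw [eq_div_iff hEjm]
    linear_combination qPoch_shift q (j + m)
  have hss : (-1 : ℂ) ^ (j + m + j) * (-1 : ℂ) ^ (j + m) = (-1 : ℂ) ^ j := by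
    rw [← pow_add, show (j + m + j) + (j + m) = 2 * (j + m) + j from by omega, pow_add,
      pow_mul, neg_one_sq, one_pow, one_mul]
  have hEm := E_ne_zero hq1 m
  have hE2jm := E_ne_zero hq1 (2 * j + m)
  have hne1 : (1 : ℂ) - q ^ (2 * j + m + 1) ≠ 0 := one_sub_pow_ne hq1 (2 * j + m)
  have hE2i := E_ne_zero hq1 (2 * (j + m))
  have hE2jm1 : E q (2 * j + m + 1) = E q (2 * j + m) * (1 - q ^ (2 * j + m + 1)) :=
    E_succ q (2 * j + m)
  calc (-1 : ℂ) ^ (j + m + j) *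
        q ^ (-((((j + m : ℤ) - j) * ((j + m : ℤ) + j - 1)) / 2)) *
        qBinom q (2 * (j + m)) ((j + m) - j) *
        (qInt q (2 * j + 1) / qInt q ((j + m) + j + 1)) *
        ((-1 : ℂ) ^ (j + m) * q ^ ((j + m) * ((j + m) + 1) / 2) /
          qPoch (q ^ ((j + m) + 1)) q (j + m))
      = ((-1 : ℂ) ^ (j + m + j) * (-1 : ℂ) ^ (j + m)) *
        (q ^ (-((((j + m : ℤ) - j) * ((j + m : ℤ) + j - 1)) / 2)) *
          qBinom q (2 * (j + m)) ((j + m) - j) *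
          (qInt q (2 * j + 1) / qInt q ((j + m) + j + 1)) *
          (q ^ ((j + m) * ((j + m) + 1) / 2) /
            qPoch (q ^ ((j + m) + 1)) q (j + m))) := by ring
  _ = (-1 : ℂ) ^ j *
        (q ^ (-((((j + m : ℤ) - j) * ((j + m : ℤ) + j - 1)) / 2)) *
          qBinom q (2 * (j + m)) ((j + m) - j) *
          (qInt q (2 * j + 1) / qInt q ((j + m) + j + 1)) *
          (q ^ ((j + m) * ((j + m) + 1) / 2) /
            qPoch (q ^ ((j + m) + 1)) q (j + m))) := by rw [hss]
  _ = ((-1 : ℂ) ^ j * q ^ (j * (j + 1) / 2) * (1 - q ^ (2 * j + 1))) *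
          (q ^ m * E q (j + m) / (E q m * E q (2 * j + m + 1))) := by
      rw [hz, hbin, hqint, hpoch, hE2jm1]
      exact alg_aux _ _ _ _ _ _ _ _ _ _ (pow_ne_zero _ hq) hEm hE2jm hE2i hEjm hne1

lemma scalar_eq (hq0 : 0 < ‖q‖) (j : ℕ) :
    (q ^ (-((j : ℤ) ^ 2)) - q ^ (-(((j : ℤ) + 1) ^ 2))) * ((-1 : ℂ) ^ (j + 1) * q ^ NJ j)
      = (-1 : ℂ) ^ j * q ^ (j * (j + 1) / 2) * (1 - q ^ (2 * j + 1)) := by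
  have hq : q ≠ 0 := fun h => by rw [h, norm_zero] at hq0; exact lt_irrefl 0 hq0
  have hd2 : 2 ∣ j * (j + 1) := even_iff_two_dvd.mp (Nat.even_mul_succ_self j)
  have ht2 : 2 * (j * (j + 1) / 2) = j * (j + 1) := Nat.mul_div_cancel' hd2
  have ht2' : (2:ℤ) * ((j * (j + 1) / 2 : ℕ) : ℤ) = (j:ℤ) * ((j:ℤ) + 1) := by exact_mod_cast ht2
  have hNJ' : (2:ℤ) * ((NJ j : ℕ) : ℤ) = ((j:ℤ) + 1) * (3 * (j:ℤ) + 2) := by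
    exact_mod_cast NJ_mul_two j
  have he1 : -((j : ℤ) ^ 2) + (NJ j : ℤ) = ((j * (j + 1) / 2 : ℕ) : ℤ) + ((2 * j + 1 : ℕ) : ℤ) := by
    have hc : ((2 * j + 1 : ℕ) : ℤ) = 2 * (j:ℤ) + 1 := by push_cast; ring
    have h2 : (2:ℤ) * (-((j : ℤ) ^ 2) + (NJ j : ℤ))
        = 2 * (((j * (j + 1) / 2 : ℕ) : ℤ) + ((2 * j + 1 : ℕ) : ℤ)) := by
      rw [hc]
      linear_combination hNJ' - ht2'
    linarith [h2]
  have he2 : -(((j : ℤ) + 1) ^ 2) + (NJ j : ℤ) = ((j * (j + 1) / 2 : ℕ) : ℤ) := by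
    have h2 : (2:ℤ) * (-(((j : ℤ) + 1) ^ 2) + (NJ j : ℤ))
        = 2 * ((j * (j + 1) / 2 : ℕ) : ℤ) := by
      linear_combination hNJ' - ht2'
    linarith [h2]
  have h1 : q ^ (-((j : ℤ) ^ 2)) * q ^ ((NJ j : ℕ) : ℤ)
      = q ^ (j * (j + 1) / 2) * q ^ (2 * j + 1) := by
    rw [← zpow_add₀ hq, he1, zpow_add₀ hq, zpow_natCast, zpow_natCast]
  have h2 : q ^ (-(((j : ℤ) + 1) ^ 2)) * q ^ ((NJ j : ℕ) : ℤ) = q ^ (j * (j + 1) / 2) := by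
    rw [← zpow_add₀ hq, he2, zpow_natCast]
  have hsplit : q ^ (NJ j) = q ^ ((NJ j : ℕ) : ℤ) := (zpow_natCast q (NJ j)).symm
  calc (q ^ (-((j : ℤ) ^ 2)) - q ^ (-(((j : ℤ) + 1) ^ 2))) * ((-1 : ℂ) ^ (j + 1) * q ^ NJ j)
      = (-1 : ℂ) ^ (j + 1) * (q ^ (-((j : ℤ) ^ 2)) * q ^ ((NJ j : ℕ) : ℤ))
        - (-1 : ℂ) ^ (j + 1) * (q ^ (-(((j : ℤ) + 1) ^ 2)) * q ^ ((NJ j : ℕ) : ℤ)) := by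
        rw [hsplit]; ring
  _ = (-1 : ℂ) ^ (j + 1) * (q ^ (j * (j + 1) / 2) * q ^ (2 * j + 1))
        - (-1 : ℂ) ^ (j + 1) * q ^ (j * (j + 1) / 2) := by rw [h1, h2]
  _ = (-1 : ℂ) ^ j * q ^ (j * (j + 1) / 2) * (1 - q ^ (2 * j + 1)) := by
        rw [pow_succ]; ring

end RegAux

/-- Coefficient identity underlying the regularized `+1`-surgery formula: for `0 < |q| < 1`,
`∑_{i≥j} (−1)^{i+j} q^{−(i−j)(i+j−1)/2} C_q(2i,i−j) ([2j+1]_q/[i+j+1]_q)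
  (−1)^i q^{i(i+1)/2}/(q^{i+1};q)_i
 = (q^{−j²} − q^{−(j+1)²}) (∑_{|k|>j} (−1)^k q^{k(3k+1)/2}) / (q;q)_∞`,
with both the `i`-series (indexed by `i = j + m`, `m ≥ 0`) and the theta series
converging absolutely. -/
theorem regularized_plus_one_surgery_coefficient (j : ℕ) (q : ℂ)
    (hq0 : 0 < ‖q‖) (hq1 : ‖q‖ < 1) :
    Summable (fun m : ℕ =>
      ‖(-1 : ℂ) ^ (j + m + j) *
        q ^ (-((((j + m : ℤ) - j) * ((j + m : ℤ) + j - 1)) / 2)) *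
        qBinom q (2 * (j + m)) ((j + m) - j) *
        (qInt q (2 * j + 1) / qInt q ((j + m) + j + 1)) *
        ((-1 : ℂ) ^ (j + m) * q ^ ((j + m) * ((j + m) + 1) / 2) /
          qPoch (q ^ ((j + m) + 1)) q (j + m))‖) ∧
    Summable (fun k : ℤ =>
      ‖(if (j : ℤ) < |k| then (-1 : ℂ) ^ k * q ^ (k * (3 * k + 1) / 2) else 0)‖) ∧
    ∑' m : ℕ, (-1 : ℂ) ^ (j + m + j) *
        q ^ (-((((j + m : ℤ) - j) * ((j + m : ℤ) + j - 1)) / 2)) *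
        qBinom q (2 * (j + m)) ((j + m) - j) *
        (qInt q (2 * j + 1) / qInt q ((j + m) + j + 1)) *
        ((-1 : ℂ) ^ (j + m) * q ^ ((j + m) * ((j + m) + 1) / 2) /
          qPoch (q ^ ((j + m) + 1)) q (j + m))
      = (q ^ (-((j : ℤ) ^ 2)) - q ^ (-(((j : ℤ) + 1) ^ 2))) *
          (∑' k : ℤ, if (j : ℤ) < |k| then (-1 : ℂ) ^ k * q ^ (k * (3 * k + 1) / 2) else 0) /
          ∏' l : ℕ, (1 - q ^ (l + 1)) := by
  have hPne : RegAux.PP q ≠ 0 := RegAux.P_ne_zero hq1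
  have hEj : RegAux.E q j ≠ 0 := RegAux.E_ne_zero hq1 j
  refine ⟨?_, RegAux.summable_theta_norm hq0 hq1 j, ?_⟩
  · apply RegAux.summable_norm_of_geom_bound (norm_nonneg q) hq1
      (K := ‖(-1 : ℂ) ^ j * q ^ (j * (j + 1) / 2) * (1 - q ^ (2 * j + 1))‖ *
        (Real.exp (‖q‖ / (1 - ‖q‖)) * ((Real.exp (-(‖q‖ / (1 - ‖q‖) ^ 2)))⁻¹) ^ 2))
    intro m
    rw [RegAux.summand_eq hq0 hq1 j m, norm_mul]
    calc ‖(-1 : ℂ) ^ j * q ^ (j * (j + 1) / 2) * (1 - q ^ (2 * j + 1))‖ *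
          ‖q ^ m * RegAux.E q (j + m) / (RegAux.E q m * RegAux.E q (2 * j + m + 1))‖
        ≤ ‖(-1 : ℂ) ^ j * q ^ (j * (j + 1) / 2) * (1 - q ^ (2 * j + 1))‖ *
          ((Real.exp (‖q‖ / (1 - ‖q‖)) * ((Real.exp (-(‖q‖ / (1 - ‖q‖) ^ 2)))⁻¹) ^ 2) * ‖q‖ ^ m) :=
          mul_le_mul_of_nonneg_left (RegAux.Fj_term_bound hq1 j m) (norm_nonneg _)
    _ = _ := by ring
  · have h1 : (∑' m : ℕ, (-1 : ℂ) ^ (j + m + j) *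
        q ^ (-((((j + m : ℤ) - j) * ((j + m : ℤ) + j - 1)) / 2)) *
        qBinom q (2 * (j + m)) ((j + m) - j) *
        (qInt q (2 * j + 1) / qInt q ((j + m) + j + 1)) *
        ((-1 : ℂ) ^ (j + m) * q ^ ((j + m) * ((j + m) + 1) / 2) /
          qPoch (q ^ ((j + m) + 1)) q (j + m)))
        = ((-1 : ℂ) ^ j * q ^ (j * (j + 1) / 2) * (1 - q ^ (2 * j + 1))) * RegAux.Fj q j := by
      simp only [RegAux.Fj]
      rw [← tsum_mul_left]
      exact tsum_congr fun m => RegAux.summand_eq hq0 hq1 j m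
    rw [h1]
    rw [show (∑' k : ℤ, if (j : ℤ) < |k| then (-1 : ℂ) ^ k * q ^ (k * (3 * k + 1) / 2) else 0)
        = RegAux.Tt q j from rfl]
    rw [show (∏' l : ℕ, (1 - q ^ (l + 1))) = RegAux.PP q from rfl]
    rw [RegAux.T_eq_R hq0 hq1 j]
    simp only [RegAux.Rr]
    have hFj : RegAux.Fj q j = RegAux.U q j / (RegAux.PP q * RegAux.E q j) := by
      rw [eq_div_iff (mul_ne_zero hPne hEj)]
      linear_combination RegAux.F_eq hq1 j
    rw [hFj, ← RegAux.scalar_eq hq0 j]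
    field_simp
end

section
/- For every complex number q with 0 < |q| < 1, the following identity holds: ∑_{n=0}^{∞} q^{n²}/(q^{n+1};q)_n = ∑_{j=0}^{∞} (q^{j²} − q^{(j+1)²}) · ∑_{i=0}^{j} q^{−i(j−i)} C_q(j+i, 2i), both series converging absolutely. -/
namespace MockSeven

noncomputable def tt (q : ℂ) (n k : ℕ) : ℂ :=
  qPoch (q ^ (2*n+1)) q k / qPoch q q k * q ^ (k^2 + n*k) * (1 - q ^ (2*n+2*k+1))

noncomputable def bb (q : ℂ) (n k : ℕ) : ℂ :=
  qPoch (q ^ (2*n+1)) q k / qPoch q q k * q ^ (k^2 + n*k) *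
    ((1 - q ^ k) * (1 + q ^ (2*k+2) * q ^ (3*n)) - q * q ^ n * (1 - q ^ (2*k)))

lemma qPoch_zero (a q : ℂ) : qPoch a q 0 = 1 := by simp [qPoch]

lemma qPoch_succ (a q : ℂ) (k : ℕ) : qPoch a q (k+1) = qPoch a q k * (1 - a * q ^ k) :=
  Finset.prod_range_succ _ _

lemma qPoch_succ' (a q : ℂ) (k : ℕ) : qPoch a q (k+1) = (1 - a) * qPoch (a*q) q k := by
  rw [qPoch, Finset.prod_range_succ']
  simp only [pow_zero, mul_one]
  rw [mul_comm]
  congr 1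
  refine Finset.prod_congr rfl fun l _ => ?_
  ring

lemma qPoch_q_add (q : ℂ) (m k : ℕ) :
    qPoch q q (m + k) = qPoch q q m * qPoch (q ^ (m+1)) q k := by
  rw [qPoch, Finset.prod_range_add]
  congr 1
  refine Finset.prod_congr rfl fun l _ => ?_
  ring

lemma qPoch_one_two (a q : ℂ) (m : ℕ) :
    (1 - a) * qPoch (a*q) q (m+1) = qPoch a q m * ((1 - a * q ^ m) * (1 - a * q ^ m * q)) := by
  have h2 : qPoch a q (m+1+1) = qPoch a q m * (1 - a*q^m) * (1 - a*q^(m+1)) := by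
    rw [qPoch_succ, qPoch_succ]
  rw [qPoch_succ' a q (m+1), pow_succ] at h2
  linear_combination h2

lemma qPoch_two_step (a q : ℂ) (k : ℕ) :
    (1 - a) * ((1 - a*q) * qPoch (a*q*q) q k)
      = qPoch a q k * ((1 - a * q ^ k) * (1 - a * q * q ^ k)) := by
  have h1 : qPoch a q (k+1+1) = (1-a) * ((1 - a*q) * qPoch (a*q*q) q k) := by
    rw [qPoch_succ' a q (k+1), qPoch_succ' (a*q) q k]
  have h2 : qPoch a q (k+1+1) = qPoch a q k * (1 - a*q^k) * (1 - a*q^(k+1)) := by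
    rw [qPoch_succ, qPoch_succ]
  rw [h1, pow_succ] at h2
  linear_combination h2

lemma one_sub_ne_zero_of_norm_lt {x : ℂ} (h : ‖x‖ < 1) : (1 : ℂ) - x ≠ 0 := by
  intro h0
  rw [sub_eq_zero] at h0
  rw [← h0] at h
  simp at h

lemma norm_q_pow_lt_one {q : ℂ} (hq1 : ‖q‖ < 1) {m : ℕ} (hm : m ≠ 0) : ‖q ^ m‖ < 1 := by
  rw [norm_pow]
  exact pow_lt_one₀ (norm_nonneg q) hq1 hm

lemma qPoch_pow_ne_zero {q : ℂ} (hq1 : ‖q‖ < 1) {c : ℕ} (hc : c ≠ 0) (m : ℕ) :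
    qPoch (q ^ c) q m ≠ 0 := by
  rw [qPoch]
  refine Finset.prod_ne_zero_iff.mpr fun l _ => ?_
  have : (q:ℂ)^c * q^l = q^(c+l) := by rw [pow_add]
  rw [this]
  exact one_sub_ne_zero_of_norm_lt (norm_q_pow_lt_one hq1 (by omega))

lemma qPoch_q_ne_zero {q : ℂ} (hq1 : ‖q‖ < 1) (m : ℕ) : qPoch q q m ≠ 0 := by
  have := qPoch_pow_ne_zero hq1 (c := 1) one_ne_zero m
  simpa using this


lemma key_step (q : ℂ) (hq1 : ‖q‖ < 1) (n k : ℕ) :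
    (1 - q^(n+1)) * tt q n k - (1 - q^(2*n+1)) * (1 - q^(2*n+2)) * tt q (n+1) k
      = bb q n k - bb q n (k+1) := by
  have hQ : qPoch q q k ≠ 0 := qPoch_q_ne_zero hq1 k
  have hx : (1 : ℂ) - q * q ^ k ≠ 0 := by
    have : (q:ℂ) * q ^ k = q ^ (k+1) := by ring
    rw [this]
    exact one_sub_ne_zero_of_norm_lt (norm_q_pow_lt_one hq1 (by omega))
  have h1 : (1:ℂ) - q^(2*n+1) ≠ 0 :=
    one_sub_ne_zero_of_norm_lt (norm_q_pow_lt_one hq1 (by omega))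
  have h2 : (1:ℂ) - q^(2*n+1) * q ≠ 0 := by
    have : (q:ℂ)^(2*n+1) * q = q ^ (2*n+2) := by ring
    rw [this]
    exact one_sub_ne_zero_of_norm_lt (norm_q_pow_lt_one hq1 (by omega))
  -- formula for the shifted Pochhammer
  have hP' : qPoch (q^(2*(n+1)+1)) q k
      = qPoch (q^(2*n+1)) q k * ((1 - q^(2*n+1) * q ^ k) * (1 - q^(2*n+1) * q * q ^ k))
        / ((1 - q^(2*n+1)) * (1 - q^(2*n+1) * q)) := by
    have hq23 : (q:ℂ)^(2*(n+1)+1) = q^(2*n+1) * q * q := by ring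
    rw [hq23, eq_div_iff (by exact mul_ne_zero h1 h2)]
    have := qPoch_two_step (q^(2*n+1)) q k
    linear_combination this
  simp only [tt, bb, hP', qPoch_succ]
  have hx' : (1:ℂ) - q ^ k * q ≠ 0 := by rwa [mul_comm]
  field_simp
  ring

section Bounds
variable {q : ℂ}

lemma sum_pow_le (hq1 : ‖q‖ < 1) (m : ℕ) :
    ∑ l ∈ Finset.range m, ‖q‖^l ≤ (1-‖q‖)⁻¹ := by
  have h := Summable.sum_le_tsum (Finset.range m) (fun i _ => pow_nonneg (norm_nonneg q) i)
    (summable_geometric_of_lt_one (norm_nonneg q) hq1)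
  rwa [tsum_geometric_of_lt_one (norm_nonneg q) hq1] at h

lemma sum_pow_succ_le (hq1 : ‖q‖ < 1) (m : ℕ) :
    ∑ l ∈ Finset.range m, ‖q‖^(1+l) ≤ ‖q‖ * (1-‖q‖)⁻¹ := by
  have : ∀ l, ‖q‖^(1+l) = ‖q‖ * ‖q‖^l := fun l => by rw [pow_add, pow_one]
  simp only [this, ← Finset.mul_sum]
  exact mul_le_mul_of_nonneg_left (sum_pow_le hq1 m) (norm_nonneg q)

lemma qPoch_norm_le (hq1 : ‖q‖ < 1) {c : ℕ} (hc : c ≠ 0) (m : ℕ) :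
    ‖qPoch (q^c) q m‖ ≤ Real.exp (‖q‖ * (1-‖q‖)⁻¹) := by
  rw [qPoch, norm_prod]
  calc ∏ l ∈ Finset.range m, ‖1 - q^c * q^l‖
      ≤ ∏ l ∈ Finset.range m, Real.exp (‖q‖^(1+l)) := by
        refine Finset.prod_le_prod (fun l _ => norm_nonneg _) (fun l _ => ?_)
        have hb : ‖(1:ℂ) - q^c * q^l‖ ≤ 1 + ‖q‖^(1+l) := by
          refine (norm_sub_le _ _).trans ?_
          have : ‖(q:ℂ)^c * q^l‖ = ‖q‖^(c+l) := by
            rw [← pow_add]; exact norm_pow _ _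
          rw [norm_one, this]
          have : ‖q‖^(c+l) ≤ ‖q‖^(1+l) :=
            pow_le_pow_of_le_one (norm_nonneg q) hq1.le (by omega)
          linarith
        refine hb.trans ?_
        have := Real.add_one_le_exp (‖q‖^(1+l))
        linarith
    _ = Real.exp (∑ l ∈ Finset.range m, ‖q‖^(1+l)) := (Real.exp_sum _ _).symm
    _ ≤ Real.exp (‖q‖ * (1-‖q‖)⁻¹) := Real.exp_le_exp.mpr (sum_pow_succ_le hq1 m)

lemma exp_le_one_sub {x : ℝ} (h0 : 0 ≤ x) (h1 : x < 1) :
    Real.exp (-(x/(1-x))) ≤ 1 - x := by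
  have hpos : 0 < 1 - x := by linarith
  have h := Real.add_one_le_exp (x/(1-x))
  have he : x/(1-x) + 1 = (1-x)⁻¹ := by field_simp; ring
  rw [he] at h
  rw [Real.exp_neg]
  calc (Real.exp (x/(1-x)))⁻¹ ≤ ((1-x)⁻¹)⁻¹ := by
        exact inv_anti₀ (by positivity) h
    _ = 1 - x := inv_inv _

lemma qPoch_norm_ge (hq1 : ‖q‖ < 1) {c : ℕ} (hc : c ≠ 0) (m : ℕ) :
    Real.exp (-(‖q‖ * (1-‖q‖)⁻¹ * (1-‖q‖)⁻¹)) ≤ ‖qPoch (q^c) q m‖ := by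
  have hr0 : (0:ℝ) ≤ ‖q‖ := norm_nonneg q
  have hpos : (0:ℝ) < 1 - ‖q‖ := by linarith
  rw [qPoch, norm_prod]
  calc Real.exp (-(‖q‖ * (1-‖q‖)⁻¹ * (1-‖q‖)⁻¹))
      ≤ Real.exp (∑ l ∈ Finset.range m, -(‖q‖^(1+l) * (1-‖q‖)⁻¹)) := by
        apply Real.exp_le_exp.mpr
        have ha : (0:ℝ) ≤ (1-‖q‖)⁻¹ := by positivity
        have h := sum_pow_succ_le hq1 m
        have h2 : ∑ l ∈ Finset.range m, ‖q‖^(1+l) * (1-‖q‖)⁻¹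
            ≤ ‖q‖*(1-‖q‖)⁻¹*(1-‖q‖)⁻¹ := by
          rw [← Finset.sum_mul]
          exact mul_le_mul_of_nonneg_right h ha
        have h3 : ∑ l ∈ Finset.range m, -(‖q‖^(1+l) * (1-‖q‖)⁻¹)
            = -∑ l ∈ Finset.range m, ‖q‖^(1+l) * (1-‖q‖)⁻¹ := by
          rw [← Finset.sum_neg_distrib]
        rw [h3]
        linarith
    _ = ∏ l ∈ Finset.range m, Real.exp (-(‖q‖^(1+l) * (1-‖q‖)⁻¹)) := Real.exp_sum _ _
    _ ≤ ∏ l ∈ Finset.range m, ‖1 - q^c * q^l‖ := by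
        refine Finset.prod_le_prod (fun l _ => (Real.exp_pos _).le) (fun l _ => ?_)
        have hno : ‖(q:ℂ)^c * q^l‖ = ‖q‖^(c+l) := by rw [← pow_add]; exact norm_pow _ _
        have ht1 : ‖q‖^(c+l) ≤ ‖q‖^(1+l) := pow_le_pow_of_le_one hr0 hq1.le (by omega)
        have ht2 : ‖q‖^(1+l) ≤ ‖q‖ := by
          calc ‖q‖^(1+l) ≤ ‖q‖^1 := pow_le_pow_of_le_one hr0 hq1.le (by omega)
          _ = ‖q‖ := pow_one _
        have htlt : ‖q‖^(c+l) < 1 := by nlinarith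
        have h1 : Real.exp (-(‖q‖^(1+l) * (1-‖q‖)⁻¹)) ≤ Real.exp (-(‖q‖^(c+l)/(1-‖q‖^(c+l)))) := by
          apply Real.exp_le_exp.mpr
          have hd : ‖q‖^(c+l)/(1-‖q‖^(c+l)) ≤ ‖q‖^(1+l) * (1-‖q‖)⁻¹ := by
            rw [div_le_iff₀ (by nlinarith)]
            have hkey : ‖q‖^(1+l) * (1-‖q‖)⁻¹ * (1-‖q‖)
                ≤ ‖q‖^(1+l) * (1-‖q‖)⁻¹ * (1-‖q‖^(c+l)) := by
              apply mul_le_mul_of_nonneg_left (by nlinarith) (by positivity)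
            have he : ‖q‖^(1+l) * (1-‖q‖)⁻¹ * (1-‖q‖) = ‖q‖^(1+l) := by
              rw [mul_assoc, inv_mul_cancel₀ hpos.ne', mul_one]
            linarith
          linarith
        have h2 : Real.exp (-(‖q‖^(c+l)/(1-‖q‖^(c+l)))) ≤ 1 - ‖q‖^(c+l) :=
          exp_le_one_sub (pow_nonneg hr0 _) htlt
        have h3 : 1 - ‖q‖^(c+l) ≤ ‖1 - q^c * q^l‖ := by
          have := norm_sub_norm_le (1:ℂ) (q^c * q^l)
          rw [norm_one, hno] at this
          linarith
        linarith
end Bounds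

section Series
variable {q : ℂ}
open Filter Topology

noncomputable def Uc (q : ℂ) : ℝ := Real.exp (‖q‖ * (1-‖q‖)⁻¹)
noncomputable def Lc (q : ℂ) : ℝ := Real.exp (-(‖q‖ * (1-‖q‖)⁻¹ * (1-‖q‖)⁻¹))
noncomputable def Kc (q : ℂ) : ℝ := 2 * Uc q / Lc q

lemma Lc_pos (q : ℂ) : 0 < Lc q := Real.exp_pos _
lemma Kc_pos (q : ℂ) : 0 < Kc q := by
  have := Real.exp_pos (‖q‖ * (1-‖q‖)⁻¹)
  have := Lc_pos q
  unfold Kc Uc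
  positivity

lemma qPoch_q_norm_ge (hq1 : ‖q‖ < 1) (m : ℕ) : Lc q ≤ ‖qPoch q q m‖ := by
  have := qPoch_norm_ge (q := q) hq1 (c := 1) one_ne_zero m
  simpa [Lc] using this

lemma norm_one_sub_pow_le_two (hq1 : ‖q‖ < 1) (m : ℕ) : ‖(1:ℂ) - q^m‖ ≤ 2 := by
  refine (norm_sub_le _ _).trans ?_
  rw [norm_one, norm_pow]
  have : ‖q‖^m ≤ 1 := pow_le_one₀ (norm_nonneg q) hq1.le
  linarith

lemma norm_one_add_pow_le_two (hq1 : ‖q‖ < 1) (m l : ℕ) : ‖(1:ℂ) + q^m * q^l‖ ≤ 2 := by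
  refine (norm_add_le _ _).trans ?_
  rw [norm_one, norm_mul, norm_pow, norm_pow]
  have h1 : ‖q‖^m ≤ 1 := pow_le_one₀ (norm_nonneg q) hq1.le
  have h2 : ‖q‖^l ≤ 1 := pow_le_one₀ (norm_nonneg q) hq1.le
  nlinarith [pow_nonneg (norm_nonneg q) m, pow_nonneg (norm_nonneg q) l]

lemma tt_norm_le (hq1 : ‖q‖ < 1) (n k : ℕ) : ‖tt q n k‖ ≤ Kc q * ‖q‖^(k^2+n*k) := by
  rw [tt, norm_mul, norm_mul, norm_div, norm_pow]
  have hP : ‖qPoch (q^(2*n+1)) q k‖ ≤ Uc q := qPoch_norm_le hq1 (by omega) k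
  have hQ : Lc q ≤ ‖qPoch q q k‖ := qPoch_q_norm_ge hq1 k
  have hs : ‖(1:ℂ) - q^(2*n+2*k+1)‖ ≤ 2 := norm_one_sub_pow_le_two hq1 _
  have hU0 : 0 ≤ Uc q := by unfold Uc; positivity
  have hdiv : ‖qPoch (q^(2*n+1)) q k‖ / ‖qPoch q q k‖ ≤ Uc q / Lc q :=
    div_le_div₀ hU0 hP (Lc_pos q) hQ
  calc ‖qPoch (q^(2*n+1)) q k‖ / ‖qPoch q q k‖ * ‖q‖^(k^2+n*k) * ‖(1:ℂ) - q^(2*n+2*k+1)‖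
      ≤ (Uc q / Lc q) * ‖q‖^(k^2+n*k) * 2 := by
        have h1 : ‖qPoch (q^(2*n+1)) q k‖ / ‖qPoch q q k‖ * ‖q‖^(k^2+n*k)
            ≤ Uc q / Lc q * ‖q‖^(k^2+n*k) :=
          mul_le_mul_of_nonneg_right hdiv (pow_nonneg (norm_nonneg q) _)
        have h2 : (0:ℝ) ≤ Uc q / Lc q * ‖q‖^(k^2+n*k) := by
          have := Lc_pos q
          positivity
        exact mul_le_mul h1 hs (norm_nonneg _) h2
    _ = Kc q * ‖q‖^(k^2+n*k) := by unfold Kc; ring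

lemma pow_sq_le_pow (hq1 : ‖q‖ < 1) (n k : ℕ) : ‖q‖^(k^2+n*k) ≤ ‖q‖^k :=
  pow_le_pow_of_le_one (norm_nonneg q) hq1.le (by nlinarith)

lemma summable_norm_tt (hq1 : ‖q‖ < 1) (n : ℕ) : Summable (fun k => ‖tt q n k‖) := by
  refine Summable.of_nonneg_of_le (fun k => norm_nonneg _)
    (fun k => (tt_norm_le hq1 n k).trans ?_)
    (((summable_geometric_of_lt_one (norm_nonneg q) hq1).mul_left (Kc q)))
  exact mul_le_mul_of_nonneg_left (pow_sq_le_pow hq1 n k) (Kc_pos q).le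

lemma summable_tt (hq1 : ‖q‖ < 1) (n : ℕ) : Summable (tt q n) :=
  (summable_norm_tt hq1 n).of_norm

lemma bb_norm_le (hq1 : ‖q‖ < 1) (n k : ℕ) : ‖bb q n k‖ ≤ 3 * Kc q * ‖q‖^(k^2+n*k) := by
  rw [bb, norm_mul, norm_mul, norm_div, norm_pow]
  have hP : ‖qPoch (q^(2*n+1)) q k‖ ≤ Uc q := qPoch_norm_le hq1 (by omega) k
  have hQ : Lc q ≤ ‖qPoch q q k‖ := qPoch_q_norm_ge hq1 k
  have hU0 : 0 ≤ Uc q := by unfold Uc; positivity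
  have hdiv : ‖qPoch (q^(2*n+1)) q k‖ / ‖qPoch q q k‖ ≤ Uc q / Lc q :=
    div_le_div₀ hU0 hP (Lc_pos q) hQ
  have hs : ‖(1 - q ^ k) * (1 + q ^ (2*k+2) * q ^ (3*n)) - q * q ^ n * (1 - q ^ (2*k))‖ ≤ 6 := by
    refine (norm_sub_le _ _).trans ?_
    have h1 : ‖(1 - q ^ k) * (1 + q ^ (2*k+2) * q ^ (3*n))‖ ≤ 4 := by
      rw [norm_mul]
      have := norm_one_sub_pow_le_two hq1 k
      have := norm_one_add_pow_le_two hq1 (2*k+2) (3*n)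
      nlinarith [norm_nonneg ((1:ℂ) - q^k), norm_nonneg ((1:ℂ) + q^(2*k+2)*q^(3*n))]
    have h2 : ‖q * q ^ n * (1 - q ^ (2*k))‖ ≤ 2 := by
      rw [norm_mul, norm_mul, norm_pow]
      have ha : ‖q‖ ≤ 1 := hq1.le
      have hb : ‖q‖^n ≤ 1 := pow_le_one₀ (norm_nonneg q) hq1.le
      have hc := norm_one_sub_pow_le_two hq1 (2*k)
      have h31 : ‖q‖ * ‖q‖^n ≤ 1 := by nlinarith [norm_nonneg q, pow_nonneg (norm_nonneg q) n]
      have h32 : ‖q‖ * ‖q‖^n * ‖(1:ℂ) - q^(2*k)‖ ≤ 1 * 2 :=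
        mul_le_mul h31 hc (norm_nonneg _) zero_le_one
      linarith
    linarith
  calc ‖qPoch (q^(2*n+1)) q k‖ / ‖qPoch q q k‖ * ‖q‖^(k^2+n*k) *
        ‖(1 - q ^ k) * (1 + q ^ (2*k+2) * q ^ (3*n)) - q * q ^ n * (1 - q ^ (2*k))‖
      ≤ (Uc q / Lc q) * ‖q‖^(k^2+n*k) * 6 := by
        have h1 : ‖qPoch (q^(2*n+1)) q k‖ / ‖qPoch q q k‖ * ‖q‖^(k^2+n*k)
            ≤ Uc q / Lc q * ‖q‖^(k^2+n*k) :=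
          mul_le_mul_of_nonneg_right hdiv (pow_nonneg (norm_nonneg q) _)
        have h2 : (0:ℝ) ≤ Uc q / Lc q * ‖q‖^(k^2+n*k) := by
          have := Lc_pos q
          positivity
        exact mul_le_mul h1 hs (norm_nonneg _) h2
    _ = 3 * Kc q * ‖q‖^(k^2+n*k) := by unfold Kc; ring

lemma bb_zero (n : ℕ) : bb q n 0 = 0 := by
  simp [bb]

lemma bb_tendsto (hq1 : ‖q‖ < 1) (n : ℕ) :
    Tendsto (fun k => bb q n k) atTop (𝓝 0) := by
  rw [tendsto_zero_iff_norm_tendsto_zero]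
  refine squeeze_zero (fun k => norm_nonneg _)
    (fun k => (bb_norm_le hq1 n k).trans
      (mul_le_mul_of_nonneg_left (pow_sq_le_pow hq1 n k)
        (by have := Kc_pos q; linarith))) ?_
  have h := (tendsto_pow_atTop_nhds_zero_of_lt_one (norm_nonneg q) hq1).const_mul (3 * Kc q)
  simpa using h

noncomputable def S (q : ℂ) (n : ℕ) : ℂ := ∑' k, tt q n k

lemma fe (hq1 : ‖q‖ < 1) (n : ℕ) :
    (1 - q^(n+1)) * S q n = (1 - q^(2*n+1)) * (1 - q^(2*n+2)) * S q (n+1) := by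
  have hs0 : Summable (fun k => (1 - q^(n+1)) * tt q n k) := (summable_tt hq1 n).mul_left _
  have hs1 : Summable (fun k => (1 - q^(2*n+1)) * (1 - q^(2*n+2)) * tt q (n+1) k) :=
    (summable_tt hq1 (n+1)).mul_left _
  have hdiff : ∀ k, (1 - q^(n+1)) * tt q n k
      - (1 - q^(2*n+1)) * (1 - q^(2*n+2)) * tt q (n+1) k = bb q n k - bb q n (k+1) :=
    key_step q hq1 n
  have hsub : Summable (fun k => bb q n k - bb q n (k+1)) := by
    have h := hs0.sub hs1
    refine h.congr fun k => ?_
    exact hdiff k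
  have htel : HasSum (fun k => bb q n k - bb q n (k+1)) 0 := by
    rw [hsub.hasSum_iff_tendsto_nat]
    have heq : ∀ N, ∑ i ∈ Finset.range N, (bb q n i - bb q n (i+1)) = bb q n 0 - bb q n N :=
      fun N => Finset.sum_range_sub' (bb q n) N
    simp only [heq, bb_zero, zero_sub]
    simpa using (bb_tendsto hq1 n).neg
  have hzero : (1 - q^(n+1)) * S q n - (1 - q^(2*n+1)) * (1 - q^(2*n+2)) * S q (n+1) = 0 := by
    rw [S, S, ← tsum_mul_left, ← tsum_mul_left, ← Summable.tsum_sub hs0 hs1]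
    rw [tsum_congr hdiff]
    exact htel.tsum_eq
  linear_combination hzero

lemma prod_one_le (a : ℂ) (m : ℕ) :
    (1:ℝ) ≤ ∏ l ∈ Finset.range m, (1 + ‖a‖ * ‖q‖^l) := by
  calc (1:ℝ) = ∏ _l ∈ Finset.range m, (1:ℝ) := by simp
    _ ≤ ∏ l ∈ Finset.range m, (1 + ‖a‖ * ‖q‖^l) :=
      Finset.prod_le_prod (fun l _ => zero_le_one)
        (fun l _ => by nlinarith [norm_nonneg a, pow_nonneg (norm_nonneg q) l])

lemma qPoch_sub_one_bound (a : ℂ) (m : ℕ) :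
    ‖qPoch a q m - 1‖ ≤ (∏ l ∈ Finset.range m, (1 + ‖a‖ * ‖q‖^l)) - 1 := by
  induction m with
  | zero => simp [qPoch]
  | succ m ih =>
    rw [qPoch_succ, Finset.prod_range_succ]
    have hB1 : (1:ℝ) ≤ ∏ l ∈ Finset.range m, (1 + ‖a‖ * ‖q‖^l) := prod_one_le a m
    have harg : qPoch a q m * (1 - a * q ^ m) - 1
        = (qPoch a q m - 1) * (1 - a * q ^ m) - a * q ^ m := by ring
    rw [harg]
    refine (norm_sub_le _ _).trans ?_
    rw [norm_mul]
    have h1 : ‖(1:ℂ) - a * q^m‖ ≤ 1 + ‖a‖ * ‖q‖^m := by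
      refine (norm_sub_le _ _).trans ?_
      rw [norm_one, norm_mul, norm_pow]
    have h2 : ‖a * q^m‖ = ‖a‖ * ‖q‖^m := by rw [norm_mul, norm_pow]
    have h3 : ‖qPoch a q m - 1‖ * ‖(1:ℂ) - a * q^m‖
        ≤ ((∏ l ∈ Finset.range m, (1 + ‖a‖ * ‖q‖^l)) - 1) * (1 + ‖a‖ * ‖q‖^m) := by
      refine mul_le_mul ih h1 (norm_nonneg _) (by linarith)
    rw [h2]
    nlinarith [pow_nonneg (norm_nonneg q) m, norm_nonneg a]

lemma qPoch_sub_one_le (hq1 : ‖q‖ < 1) (a : ℂ) (m : ℕ) :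
    ‖qPoch a q m - 1‖ ≤ Real.exp (‖a‖ * (1-‖q‖)⁻¹) - 1 := by
  refine (qPoch_sub_one_bound a m).trans ?_
  have h1 : ∏ l ∈ Finset.range m, (1 + ‖a‖ * ‖q‖^l)
      ≤ Real.exp (‖a‖ * (1-‖q‖)⁻¹) := by
    calc ∏ l ∈ Finset.range m, (1 + ‖a‖ * ‖q‖^l)
        ≤ ∏ l ∈ Finset.range m, Real.exp (‖a‖ * ‖q‖^l) := by
          refine Finset.prod_le_prod (fun l _ => ?_) (fun l _ => ?_)
          · nlinarith [norm_nonneg a, pow_nonneg (norm_nonneg q) l]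
          · have := Real.add_one_le_exp (‖a‖ * ‖q‖^l)
            linarith
      _ = Real.exp (∑ l ∈ Finset.range m, ‖a‖ * ‖q‖^l) := (Real.exp_sum _ _).symm
      _ ≤ Real.exp (‖a‖ * (1-‖q‖)⁻¹) := by
          apply Real.exp_le_exp.mpr
          rw [← Finset.mul_sum]
          exact mul_le_mul_of_nonneg_left (sum_pow_le hq1 m) (norm_nonneg a)
  linarith

lemma poch_tendsto (hq1 : ‖q‖ < 1) :
    Tendsto (fun n => qPoch (q^(n+1)) q n) atTop (𝓝 1) := by
  rw [tendsto_iff_norm_sub_tendsto_zero]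
  have hb : ∀ n : ℕ, ‖qPoch (q^(n+1)) q n - 1‖
      ≤ Real.exp (‖q‖^(n+1) * (1-‖q‖)⁻¹) - 1 := fun n =>
    (qPoch_sub_one_le hq1 (q^(n+1)) n).trans (by rw [norm_pow])
  refine squeeze_zero (fun n => norm_nonneg _) hb ?_
  · have h1 : Tendsto (fun n : ℕ => ‖q‖^(n+1) * (1-‖q‖)⁻¹) atTop (𝓝 0) := by
      have := ((tendsto_pow_atTop_nhds_zero_of_lt_one (norm_nonneg q) hq1).comp
        (tendsto_add_atTop_nat 1)).mul_const (1-‖q‖)⁻¹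
      simpa using this
    have h2 : Tendsto (fun n : ℕ => Real.exp (‖q‖^(n+1) * (1-‖q‖)⁻¹)) atTop (𝓝 1) := by
      have := (Real.continuous_exp.tendsto 0).comp h1
      simpa [Function.comp_def] using this
    simpa using h2.sub_const 1

lemma tt_zero_eq (n : ℕ) : tt q n 0 = 1 - q^(2*n+1) := by
  simp [tt, qPoch]

lemma S_tendsto (hq1 : ‖q‖ < 1) : Tendsto (fun n => S q n) atTop (𝓝 1) := by
  rw [tendsto_iff_norm_sub_tendsto_zero]
  have hbound : ∀ n, ‖S q n - 1‖ ≤ ‖q‖^(2*n+1) + Kc q * ‖q‖^(n+1) * (1-‖q‖)⁻¹ := by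
    intro n
    have hsum := summable_tt hq1 n
    have hzero : S q n = tt q n 0 + ∑' k, tt q n (k+1) := Summable.tsum_eq_zero_add hsum
    have hshift : Summable (fun k => ‖tt q n (k+1)‖) :=
      (summable_nat_add_iff 1).mpr (summable_norm_tt hq1 n)
    have hterm : ∀ k, ‖tt q n (k+1)‖ ≤ Kc q * ‖q‖^(n+1) * ‖q‖^k := by
      intro k
      refine (tt_norm_le hq1 n (k+1)).trans ?_
      have he : ‖q‖^((k+1)^2+n*(k+1)) ≤ ‖q‖^(n+1+k) :=
        pow_le_pow_of_le_one (norm_nonneg q) hq1.le (by nlinarith)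
      calc Kc q * ‖q‖^((k+1)^2+n*(k+1)) ≤ Kc q * ‖q‖^(n+1+k) :=
            mul_le_mul_of_nonneg_left he (Kc_pos q).le
        _ = Kc q * ‖q‖^(n+1) * ‖q‖^k := by rw [pow_add]; ring
    have htail : ‖∑' k, tt q n (k+1)‖ ≤ Kc q * ‖q‖^(n+1) * (1-‖q‖)⁻¹ := by
      refine (norm_tsum_le_tsum_norm hshift).trans ?_
      have h2 : ∑' k, ‖tt q n (k+1)‖ ≤ ∑' k : ℕ, Kc q * ‖q‖^(n+1) * ‖q‖^k := by
        refine Summable.tsum_le_tsum hterm hshift ?_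
        exact (summable_geometric_of_lt_one (norm_nonneg q) hq1).mul_left _
      rw [tsum_mul_left, tsum_geometric_of_lt_one (norm_nonneg q) hq1] at h2
      exact h2
    calc ‖S q n - 1‖ = ‖∑' k, tt q n (k+1) - q^(2*n+1)‖ := by
          rw [hzero, tt_zero_eq]; congr 1; ring
      _ ≤ ‖∑' k, tt q n (k+1)‖ + ‖(q:ℂ)^(2*n+1)‖ := norm_sub_le _ _
      _ ≤ Kc q * ‖q‖^(n+1) * (1-‖q‖)⁻¹ + ‖q‖^(2*n+1) := by
          rw [norm_pow]
          exact add_le_add htail le_rfl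
      _ = ‖q‖^(2*n+1) + Kc q * ‖q‖^(n+1) * (1-‖q‖)⁻¹ := by ring
  refine squeeze_zero (fun n => norm_nonneg _) hbound ?_
  have h1 : Tendsto (fun n : ℕ => ‖q‖^(2*n+1)) atTop (𝓝 0) := by
    have hsub : ∀ n : ℕ, ‖q‖^(2*n+1) ≤ ‖q‖^n :=
      fun n => pow_le_pow_of_le_one (norm_nonneg q) hq1.le (by omega)
    exact squeeze_zero (fun n => pow_nonneg (norm_nonneg q) _) hsub
      (tendsto_pow_atTop_nhds_zero_of_lt_one (norm_nonneg q) hq1)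
  have h2 : Tendsto (fun n : ℕ => Kc q * ‖q‖^(n+1) * (1-‖q‖)⁻¹) atTop (𝓝 0) := by
    have := (((tendsto_pow_atTop_nhds_zero_of_lt_one (norm_nonneg q) hq1).comp
      (tendsto_add_atTop_nat 1)).const_mul (Kc q)).mul_const (1-‖q‖)⁻¹
    simpa [Function.comp] using this
  simpa using h1.add h2

lemma S_mul_poch (hq1 : ‖q‖ < 1) (n : ℕ) : S q n * qPoch (q^(n+1)) q n = 1 := by
  set E : ℕ → ℂ := fun n => S q n * qPoch (q^(n+1)) q n with hE
  have hstep : ∀ m, E m = E (m+1) := by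
    intro m
    have hz : (1:ℂ) - q^(m+1) ≠ 0 :=
      one_sub_ne_zero_of_norm_lt (norm_q_pow_lt_one hq1 (by omega))
    apply mul_left_cancel₀ hz
    have hR : (1 - q^(m+1)) * qPoch (q^(m+1+1)) q (m+1)
        = qPoch (q^(m+1)) q m * ((1 - q^(2*m+1)) * (1 - q^(2*m+2))) := by
      have h := qPoch_one_two (q^(m+1)) q m
      rw [show (q:ℂ)^(m+1)*q = q^(m+1+1) by ring] at h
      rw [show (q:ℂ)^(m+1)*q^m = q^(2*m+1) by rw [← pow_add]; congr 1; omega] at h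
      rw [show (q:ℂ)^(2*m+1)*q = q^(2*m+2) by ring] at h
      exact h
    calc (1 - q^(m+1)) * E m
        = ((1 - q^(m+1)) * S q m) * qPoch (q^(m+1)) q m := by rw [hE]; ring
      _ = ((1 - q^(2*m+1)) * (1 - q^(2*m+2)) * S q (m+1)) * qPoch (q^(m+1)) q m := by
          rw [fe hq1 m]
      _ = S q (m+1) * (qPoch (q^(m+1)) q m * ((1 - q^(2*m+1)) * (1 - q^(2*m+2)))) := by ring
      _ = S q (m+1) * ((1 - q^(m+1)) * qPoch (q^(m+1+1)) q (m+1)) := by rw [hR]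
      _ = (1 - q^(m+1)) * E (m+1) := by rw [hE]; ring
  have hconst : ∀ m, E m = E 0 := by
    intro m
    induction m with
    | zero => rfl
    | succ k ih => rw [← hstep k, ih]
  have hElim : Tendsto E atTop (𝓝 1) := by
    have := (S_tendsto hq1).mul (poch_tendsto hq1)
    simpa using this
  have hE0 : E 0 = 1 := by
    have h2 : Tendsto E atTop (𝓝 (E 0)) :=
      tendsto_const_nhds.congr fun m => (hconst m).symm
    exact tendsto_nhds_unique h2 hElim
  exact (hconst n).trans hE0

lemma S_val (hq1 : ‖q‖ < 1) (n : ℕ) :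
    q^(n^2) / qPoch (q^(n+1)) q n = ∑' k, q^(n^2) * tt q n k := by
  rw [tsum_mul_left]
  have h := S_mul_poch (q := q) hq1 n
  have hne : qPoch (q^(n+1)) q n ≠ 0 := qPoch_pow_ne_zero hq1 (by omega) n
  rw [div_eq_iff hne, mul_assoc]
  have hS : S q n = ∑' k, tt q n k := rfl
  rw [← hS, h, mul_one]

end Series

lemma term_eq {q : ℂ} (hqne : q ≠ 0) (hq1 : ‖q‖ < 1) {i j : ℕ} (hij : i ≤ j) :
    (q ^ (j^2) - q ^ ((j+1)^2)) * (q ^ (-(i * (j - i) : ℤ)) * qBinom q (j+i) (2*i))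
      = q ^ (i^2) * tt q i (j-i) := by
  obtain ⟨k, rfl⟩ : ∃ k, j = i + k := ⟨j - i, by omega⟩
  have hk : i + k - i = k := by omega
  rw [hk]
  have hz : (-(i * ((i+k : ℕ) - i) : ℤ)) = -((i*k : ℕ) : ℤ) := by push_cast; ring
  rw [hz, zpow_neg, zpow_natCast]
  have hQ2i : qPoch q q (2*i) ≠ 0 := qPoch_q_ne_zero hq1 _
  have hQk : qPoch q q k ≠ 0 := qPoch_q_ne_zero hq1 _
  have hB : qBinom q (i+k+i) (2*i) = qPoch (q^(2*i+1)) q k / qPoch q q k := by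
    rw [qBinom, show i+k+i = 2*i + k by ring, show 2*i+k - 2*i = k by omega,
      qPoch_q_add q (2*i) k]
    rw [mul_div_mul_left _ _ hQ2i]
  rw [hB, tt]
  have hpow : (q : ℂ)^(i*k) ≠ 0 := pow_ne_zero _ hqne
  field_simp
  ring

end MockSeven

open MockSeven Filter Topology in
set_option maxHeartbeats 1000000 in
/-- `Ẑ(−Σ(2,3,7))` from the figure-eight knot: for `0 < |q| < 1`,
`∑_{n≥0} q^{n²}/(q^{n+1};q)_n
 = ∑_{j≥0} (q^{j²} − q^{(j+1)²}) ∑_{i=0}^{j} q^{−i(j−i)} C_q(j+i,2i)`,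
both series converging absolutely. -/
theorem mock_theta_order_seven_identity (q : ℂ) (hq0 : 0 < ‖q‖) (hq1 : ‖q‖ < 1) :
    Summable (fun n : ℕ => ‖q ^ (n ^ 2) / qPoch (q ^ (n + 1)) q n‖) ∧
    Summable (fun j : ℕ =>
      ‖(q ^ (j ^ 2) - q ^ ((j + 1) ^ 2)) *
        ∑ i ∈ Finset.range (j + 1), q ^ (-(i * (j - i) : ℤ)) * qBinom q (j + i) (2 * i)‖) ∧
    ∑' n : ℕ, q ^ (n ^ 2) / qPoch (q ^ (n + 1)) q n
      = ∑' j : ℕ, (q ^ (j ^ 2) - q ^ ((j + 1) ^ 2)) *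
          ∑ i ∈ Finset.range (j + 1), q ^ (-(i * (j - i) : ℤ)) * qBinom q (j + i) (2 * i) := by
  have hqne : q ≠ 0 := by
    intro h
    rw [h] at hq0
    simp at hq0
  set F : ℕ × ℕ → ℂ := fun p => q ^ (p.1 ^ 2) * tt q p.1 p.2 with hF
  have hr0 : (0:ℝ) ≤ ‖q‖ := norm_nonneg q
  have hFbound : ∀ p : ℕ × ℕ, ‖F p‖ ≤ Kc q * (‖q‖^p.1 * ‖q‖^p.2) := by
    rintro ⟨n, k⟩
    calc ‖F (n, k)‖ = ‖q‖^(n^2) * ‖tt q n k‖ := by rw [hF, norm_mul, norm_pow]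
      _ ≤ ‖q‖^(n^2) * (Kc q * ‖q‖^(k^2+n*k)) :=
          mul_le_mul_of_nonneg_left (tt_norm_le hq1 n k) (pow_nonneg hr0 _)
      _ = Kc q * ‖q‖^(n^2+(k^2+n*k)) := by rw [pow_add]; ring
      _ ≤ Kc q * ‖q‖^(n+k) :=
          mul_le_mul_of_nonneg_left
            (pow_le_pow_of_le_one hr0 hq1.le
              (by nlinarith [Nat.le_self_pow (two_ne_zero) n, Nat.le_self_pow (two_ne_zero) k]))
            (Kc_pos q).le
      _ = Kc q * (‖q‖^n * ‖q‖^k) := by rw [pow_add]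
  have hgeom : Summable (fun n : ℕ => ‖q‖^n) := summable_geometric_of_lt_one hr0 hq1
  have hgeo : Summable (fun p : ℕ×ℕ => Kc q * (‖q‖^p.1 * ‖q‖^p.2)) :=
    (hgeom.mul_of_nonneg hgeom (fun n => pow_nonneg hr0 n)
      (fun n => pow_nonneg hr0 n)).mul_left _
  have hFnorm : Summable (fun p : ℕ×ℕ => ‖F p‖) :=
    Summable.of_nonneg_of_le (fun p => norm_nonneg _) hFbound hgeo
  have hFsum : Summable F := hFnorm.of_norm
  set e := Finset.HasAntidiagonal.sigmaAntidiagonalEquivProd (A := ℕ) with he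
  have hGsum : Summable (fun x : Σ j : ℕ, (Finset.HasAntidiagonal.antidiagonal j : Finset (ℕ×ℕ)) => F x.2) :=
    e.summable_iff.mpr hFsum
  have hGnorm : Summable (fun x : Σ j : ℕ, (Finset.HasAntidiagonal.antidiagonal j : Finset (ℕ×ℕ)) => ‖F x.2‖) :=
    e.summable_iff.mpr hFnorm
  have hrowsNorm : Summable (fun j : ℕ => ∑ p ∈ Finset.HasAntidiagonal.antidiagonal j, ‖F p‖) := by
    have h : Summable (fun j : ℕ => ∑' c : (Finset.HasAntidiagonal.antidiagonal j : Finset (ℕ×ℕ)), ‖F (c : ℕ×ℕ)‖) :=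
      hGnorm.sigma
    refine h.congr fun j => ?_
    rw [tsum_fintype]
    exact Finset.sum_coe_sort (Finset.HasAntidiagonal.antidiagonal j) (fun p => ‖F p‖)
  have hrows : ∀ j : ℕ, ∑ p ∈ Finset.HasAntidiagonal.antidiagonal j, F p
      = (q ^ (j^2) - q ^ ((j+1)^2)) *
          ∑ i ∈ Finset.range (j+1), q ^ (-(i * (j - i) : ℤ)) * qBinom q (j+i) (2*i) := by
    intro j
    rw [Finset.Nat.sum_antidiagonal_eq_sum_range_succ_mk, Finset.mul_sum]
    refine Finset.sum_congr rfl fun i hi => ?_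
    have hij : i ≤ j := by
      have := Finset.mem_range.mp hi
      omega
    exact (term_eq hqne hq1 hij).symm
  have hsum1 : Summable (fun n : ℕ => ‖q ^ (n ^ 2) / qPoch (q ^ (n + 1)) q n‖) := by
    refine Summable.of_nonneg_of_le (fun n => norm_nonneg _) (fun n => ?_)
      (hgeom.mul_left ((Lc q)⁻¹))
    rw [norm_div, norm_pow]
    have h1 : Lc q ≤ ‖qPoch (q^(n+1)) q n‖ := qPoch_norm_ge hq1 (by omega) n
    calc ‖q‖^(n^2) / ‖qPoch (q^(n+1)) q n‖ ≤ ‖q‖^(n^2) / Lc q :=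
          div_le_div_of_nonneg_left (pow_nonneg hr0 _) (Lc_pos q) h1
      _ ≤ (Lc q)⁻¹ * ‖q‖^n := by
          rw [div_eq_inv_mul]
          exact mul_le_mul_of_nonneg_left
            (pow_le_pow_of_le_one hr0 hq1.le
              (by nlinarith [Nat.le_self_pow (two_ne_zero) n])) (inv_nonneg.mpr (Lc_pos q).le)
  have hsum2 : Summable (fun j : ℕ =>
      ‖(q ^ (j ^ 2) - q ^ ((j + 1) ^ 2)) *
        ∑ i ∈ Finset.range (j + 1), q ^ (-(i * (j - i) : ℤ)) * qBinom q (j + i) (2 * i)‖) := by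
    refine Summable.of_nonneg_of_le (fun j => norm_nonneg _) (fun j => ?_) hrowsNorm
    rw [← hrows j]
    exact norm_sum_le _ _
  refine ⟨hsum1, hsum2, ?_⟩
  calc ∑' n : ℕ, q ^ (n^2) / qPoch (q^(n+1)) q n
      = ∑' n : ℕ, ∑' k : ℕ, F (n, k) := tsum_congr fun n => S_val hq1 n
    _ = ∑' p : ℕ×ℕ, F p := (Summable.tsum_prod' hFsum fun b => hFsum.prod_factor b).symm
    _ = ∑' x : Σ j : ℕ, (Finset.HasAntidiagonal.antidiagonal j : Finset (ℕ×ℕ)), F x.2 := (e.tsum_eq F).symm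
    _ = ∑' j : ℕ, ∑ p ∈ Finset.HasAntidiagonal.antidiagonal j, F p := by
        rw [Summable.tsum_sigma hGsum]
        refine tsum_congr fun j => ?_
        rw [tsum_fintype]
        exact Finset.sum_coe_sort (Finset.HasAntidiagonal.antidiagonal j) F
    _ = ∑' j : ℕ, (q ^ (j ^ 2) - q ^ ((j + 1) ^ 2)) *
          ∑ i ∈ Finset.range (j + 1), q ^ (-(i * (j - i) : ℤ)) * qBinom q (j + i) (2 * i) :=
        tsum_congr hrows
end
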